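/- arXiv:2605.09526 — 5 statements merged into one kernel-verified Lean document; each statement's English description precedes it below -/
import Mathlib

section
/- Let b ∈ ℝ and let N be a refined lattice family such that each N_{g,n} is a symmetric function of its n arguments and such that the asymmetric recursion holds at every (g,n,L) with 2g−2+n > 1 and L₁+⋯+L_n even. Then for every (g,n) with 2g−2+n > 1 and every L ∈ (ℤ_{>0})^n with L₁+⋯+L_n even, the symmetric recursion holds: 2(Σ_{i=1}^n L_i)·N_{g,n}(L) = Σ_{i≠j, 1≤i,j≤n} Σ_{p>0} p·[L_i+L_j−p]_+ · N_{g,n−1}(p, L with L_i and L_j removed) + b·Σ_{i=1}^n Σ_{p>0} p(L_i−1)·[L_i−p]_+ · N_{g−1/2,n}(p, L with L_i removed) + Σ_{i=1}^n Σ_{p,q>0} pq·[L_i−p−q]_+ · ( (1+b)·N_{g−1,n+1}(p,q, L with L_i removed) + 2·Σ_{g₁+g₂=g, I₁⊔I₂=[n]∖{i}} N_{g₁,1+|I₁|}(p,L_{I₁})·N_{g₂,1+|I₂|}(q,L_{I₂}) ). -/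
open scoped BigOperators

noncomputable section

/-- The ramp function `[x]₊ = max x 0`. -/
def ramp (x : ℝ) : ℝ := max x 0

/-- The kernel `𝓡(L₁, L_m, p)`. -/
def kerR (L1 Lm p : ℝ) : ℝ :=
  (1 / (2 * L1)) * (ramp (L1 + Lm - p) - ramp (-L1 + Lm - p) + ramp (L1 - Lm - p))

/-- The kernel `𝓔(L₁, p)`. -/
def kerE (L1 p : ℝ) : ℝ := (1 / (2 * L1)) * ramp (L1 - p)

/-- The kernel `𝓓(L₁, p, q)`. -/
def kerD (L1 p q : ℝ) : ℝ := (1 / L1) * ramp (L1 - p - q)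

/-- The sublist of entries of `L` whose (0-based) index lies in `S`, in order. -/
def selectIdxs {α : Type*} (L : List α) (S : Finset ℕ) : List α :=
  L.zipIdx.filterMap fun p => if p.2 ∈ S then some p.1 else none

/-- The sublist of entries of `L` whose (0-based) index does not lie in `S`, in order. -/
def removeIdxs {α : Type*} (L : List α) (S : Finset ℕ) : List α :=
  L.zipIdx.filterMap fun p => if p.2 ∈ S then none else some p.1

/-- A refined lattice family is indexed by `h = 2g ∈ ℤ` and a tuple of boundary lengths
(a list); by convention it vanishes when `g < 0` or `2g - 2 + n ≤ 0`. -/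
def ZeroConvention (N : ℤ → List ℤ → ℝ) : Prop :=
  ∀ (h : ℤ) (L : List ℤ), h < 0 ∨ h + (L.length : ℤ) ≤ 2 → N h L = 0

/-- The family vanishes on tuples of positive integers with odd sum. -/
def ParitySupported (N : ℤ → List ℤ → ℝ) : Prop :=
  ∀ (h : ℤ) (L : List ℤ), (∀ x ∈ L, 0 < x) → ¬ Even L.sum → N h L = 0

/-- The initial conditions for `N_{0,3}`, `N_{1/2,2}` and `N_{1,1}` (recall `h = 2g`). -/
def InitialConditions (b : ℝ) (N : ℤ → List ℤ → ℝ) : Prop :=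
  (∀ L1 L2 L3 : ℤ, 0 < L1 → 0 < L2 → 0 < L3 →
    N 0 [L1, L2, L3] = (1 + (-1 : ℝ) ^ (L1 + L2 + L3)) / 2 * (1 / 2)) ∧
  (∀ L1 L2 : ℤ, 0 < L1 → 0 < L2 →
    N 1 [L1, L2] = (1 + (-1 : ℝ) ^ (L1 + L2)) / 2 *
      (b * (((max L1 L2 : ℤ) : ℝ) - 1) / 4)) ∧
  (∀ L1 : ℤ, 0 < L1 →
    N 2 [L1] = (1 + (-1 : ℝ) ^ L1) / 2 *
      (((1 + b) * ((L1 : ℝ) ^ 2 - 4) +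
        b ^ 2 * (5 * (L1 : ℝ) ^ 2 - 12 * (L1 : ℝ) + 4)) / 96))

/-- The asymmetric recursion at `(g, n, L)` with `h = 2g`, `L = L₁ :: T`, `n = 1 + T.length`.
All sums over `p, q ∈ ℤ_{>0}` are finite because the kernels vanish for large `p, q`;
they are written here as sums up to the corresponding vanishing threshold. -/
def AsymRecAt (b : ℝ) (N : ℤ → List ℤ → ℝ) (h : ℤ) (L1 : ℤ) (T : List ℤ) : Prop :=
  N h (L1 :: T) =
    (∑ m ∈ Finset.range T.length, ∑ p ∈ Finset.Icc 1 (L1 + T.getD m 0),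
        (p : ℝ) * kerR (L1 : ℝ) ((T.getD m 0 : ℤ) : ℝ) (p : ℝ) * N h (p :: T.eraseIdx m))
    + b * (∑ p ∈ Finset.Icc 1 L1,
        (p : ℝ) * ((L1 : ℝ) - 1) * kerE (L1 : ℝ) (p : ℝ) * N (h - 1) (p :: T))
    + ∑ p ∈ Finset.Icc 1 L1, ∑ q ∈ Finset.Icc 1 L1,
        (p : ℝ) * (q : ℝ) * kerD (L1 : ℝ) (p : ℝ) (q : ℝ) *
          (((1 + b) / 2) * N (h - 2) (p :: q :: T)
            + ∑ h1 ∈ Finset.Icc 0 h, ∑ S ∈ (Finset.range T.length).powerset,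
                N h1 (p :: selectIdxs T S) * N (h - h1) (q :: removeIdxs T S))

/-- The family satisfies the asymmetric recursion at every `(g, n, L)` with
`2g - 2 + n > 1`, `L ∈ (ℤ_{>0})ⁿ` and `L₁ + ⋯ + L_n` even. -/
def AsymRecursion (b : ℝ) (N : ℤ → List ℤ → ℝ) : Prop :=
  ∀ (h : ℤ) (L1 : ℤ) (T : List ℤ), 0 < L1 → (∀ x ∈ T, 0 < x) →
    3 < h + (1 + (T.length : ℤ)) → Even (L1 + T.sum) → AsymRecAt b N h L1 T

/-- The symmetric recursion at `(g, n, L)` with `h = 2g`. -/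
def SymRecAt (b : ℝ) (N : ℤ → List ℤ → ℝ) (h : ℤ) (L : List ℤ) : Prop :=
  2 * (L.sum : ℝ) * N h L =
    (∑ i ∈ Finset.range L.length, ∑ j ∈ (Finset.range L.length).erase i,
        ∑ p ∈ Finset.Icc 1 (L.getD i 0 + L.getD j 0),
          (p : ℝ) * ramp (((L.getD i 0 : ℤ) : ℝ) + ((L.getD j 0 : ℤ) : ℝ) - (p : ℝ)) *
            N h (p :: removeIdxs L {i, j}))
    + b * (∑ i ∈ Finset.range L.length, ∑ p ∈ Finset.Icc 1 (L.getD i 0),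
        (p : ℝ) * (((L.getD i 0 : ℤ) : ℝ) - 1) *
          ramp (((L.getD i 0 : ℤ) : ℝ) - (p : ℝ)) * N (h - 1) (p :: removeIdxs L {i}))
    + ∑ i ∈ Finset.range L.length, ∑ p ∈ Finset.Icc 1 (L.getD i 0),
        ∑ q ∈ Finset.Icc 1 (L.getD i 0),
          (p : ℝ) * (q : ℝ) * ramp (((L.getD i 0 : ℤ) : ℝ) - (p : ℝ) - (q : ℝ)) *
            ((1 + b) * N (h - 2) (p :: q :: removeIdxs L {i})
              + 2 * ∑ h1 ∈ Finset.Icc 0 h,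
                  ∑ S ∈ ((Finset.range L.length).erase i).powerset,
                    N h1 (p :: selectIdxs L S) *
                      N (h - h1) (q :: selectIdxs L (((Finset.range L.length).erase i) \ S)))


/-! ### Auxiliary machinery for the proof -/

section Aux

/-- Predicate-based selection of entries of a list. -/
def selP {α : Type*} (f : ℕ → Bool) (L : List α) : List α :=
  L.zipIdx.filterMap fun p => if f p.2 then some p.1 else none

lemma enumFrom_filterMap {α : Type*} :
    ∀ (L : List α) (f : ℕ → Bool) (n : ℕ),
      (L.zipIdx n).filterMap (fun p => if f p.2 then some p.1 else none) =
      L.zipIdx.filterMap (fun p => if f (p.2 + n) then some p.1 else none) := by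
  intro L
  induction L with
  | nil => intros; rfl
  | cons a l ih =>
    intro f n
    have h1 : ((a :: l).zipIdx n) = (a, n) :: l.zipIdx (n+1) := rfl
    have h2 : (a :: l).zipIdx = (a, 0) :: l.zipIdx 1 := rfl
    rw [h1, h2, List.filterMap_cons, List.filterMap_cons]
    have e1 : (l.zipIdx (n+1)).filterMap (fun p => if f p.2 then some p.1 else none)
        = l.zipIdx.filterMap (fun p => if f (p.2 + (n+1)) then some p.1 else none) := ih f (n+1)
    have e2 : (l.zipIdx 1).filterMap (fun p => if f (p.2 + n) then some p.1 else none)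
        = l.zipIdx.filterMap (fun p => if f (p.2 + 1 + n) then some p.1 else none) := by
      have := ih (fun k => f (k + n)) 1
      simpa using this
    simp only [e1, e2]
    have e3 : (fun (p : α × ℕ) => if f (p.2 + (n+1)) then some p.1 else none)
        = (fun (p : α × ℕ) => if f (p.2 + 1 + n) then some p.1 else none) := by
      funext p; ring_nf
    rw [e3]
    by_cases h : f n <;> simp [h]

lemma selP_cons {α : Type*} (f : ℕ → Bool) (a : α) (L : List α) :
    selP f (a :: L) = (if f 0 then [a] else []) ++ selP (fun k => f (k+1)) L := by
  unfold selP
  rw [show (a :: L).zipIdx = (a, 0) :: L.zipIdx 1 from rfl, List.filterMap_cons, enumFrom_filterMap]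
  by_cases h : f 0 <;> simp [h]

lemma selectIdxs_eq_selP {α : Type*} (L : List α) (S : Finset ℕ) :
    selectIdxs L S = selP (fun k => decide (k ∈ S)) L := by
  unfold selectIdxs selP
  congr 1
  funext p
  by_cases h : p.2 ∈ S <;> simp [h]

lemma removeIdxs_eq_selP {α : Type*} (L : List α) (S : Finset ℕ) :
    removeIdxs L S = selP (fun k => !decide (k ∈ S)) L := by
  unfold removeIdxs selP
  congr 1
  funext p
  by_cases h : p.2 ∈ S <;> simp [h]

lemma selP_congr {α : Type*} :
    ∀ (L : List α) (f g : ℕ → Bool), (∀ k < L.length, f k = g k) → selP f L = selP g L := by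
  intro L
  induction L with
  | nil => intros; rfl
  | cons a l ih =>
    intro f g hfg
    rw [selP_cons, selP_cons, hfg 0 (by simp), ih _ _ (fun k hk => hfg (k+1) (by simpa using hk))]

lemma selP_all {α : Type*} :
    ∀ (L : List α) (f : ℕ → Bool), (∀ k < L.length, f k = true) → selP f L = L := by
  intro L
  induction L with
  | nil => intros; rfl
  | cons a l ih =>
    intro f hf
    rw [selP_cons, hf 0 (by simp), ih _ (fun k hk => hf (k+1) (by simpa using hk))]
    rfl

lemma selP_eraseIdx {α : Type*} :
    ∀ (L : List α) (i : ℕ) (f : ℕ → Bool),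
      selP f (L.eraseIdx i) =
        selP (fun k => decide (k ≠ i) && f (if k < i then k else k - 1)) L := by
  intro L
  induction L with
  | nil => intros; rfl
  | cons a l ih =>
    intro i f
    cases i with
    | zero =>
      rw [List.eraseIdx_cons_zero, selP_cons]
      have e : (fun k => decide (k + 1 ≠ 0) && f (if k + 1 < 0 then k + 1 else k + 1 - 1))
          = f := by
        funext k; simp
      rw [e]
      simp
    | succ i =>
      rw [List.eraseIdx_cons_succ, selP_cons, selP_cons, ih i]
      congr 1
      · apply selP_congr
        intro k _
        rcases Nat.lt_trichotomy k i with hk | hk | hk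
        · simp [hk, Nat.lt_of_lt_of_le hk (Nat.le_succ i), hk.ne]
        · subst hk; simp
        · have h1 : ¬ (k < i) := by omega
          have h2 : ¬ (k + 1 < i + 1) := by omega
          have h3 : k ≠ i := by omega
          have h4 : k + 1 ≠ i + 1 := by omega
          have h5 : k - 1 + 1 = k := by omega
          simp [h1, h2, h3, h4, h5]

lemma eraseIdx_eq_selP {α : Type*} (L : List α) (i : ℕ) :
    L.eraseIdx i = selP (fun k => decide (k ≠ i)) L := by
  have h1 : L.eraseIdx i = selP (fun _ => true) (L.eraseIdx i) :=
    (selP_all _ _ (fun _ _ => rfl)).symm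
  rw [h1, selP_eraseIdx]
  apply selP_congr
  intro k _
  simp

/-- The index shift associated to removing index `i`. -/
def shiftIdx (i m : ℕ) : ℕ := if m < i then m else m + 1

/-- The inverse index shift. -/
def unshiftIdx (i k : ℕ) : ℕ := if k < i then k else k - 1

lemma unshift_shift (i m : ℕ) : unshiftIdx i (shiftIdx i m) = m := by
  unfold shiftIdx unshiftIdx; split <;> simp_all <;> omega

lemma shift_unshift (i k : ℕ) (hk : k ≠ i) : shiftIdx i (unshiftIdx i k) = k := by
  unfold shiftIdx unshiftIdx; split <;> (try split) <;> omega

lemma shiftIdx_ne (i m : ℕ) : shiftIdx i m ≠ i := by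
  unfold shiftIdx; split <;> omega

lemma mem_image_shiftIdx (i k : ℕ) (S : Finset ℕ) :
    k ∈ S.image (shiftIdx i) ↔ k ≠ i ∧ unshiftIdx i k ∈ S := by
  simp only [Finset.mem_image]
  constructor
  · rintro ⟨m, hm, rfl⟩
    exact ⟨shiftIdx_ne i m, by rw [unshift_shift]; exact hm⟩
  · rintro ⟨hk, hm⟩
    exact ⟨unshiftIdx i k, hm, shift_unshift i k hk⟩

lemma image_shift_mem_powerset {n i : ℕ} (hi : i < n) {S : Finset ℕ}
    (hS : S ∈ (Finset.range (n-1)).powerset) :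
    S.image (shiftIdx i) ∈ ((Finset.range n).erase i).powerset := by
  rw [Finset.mem_powerset] at *
  intro k hk
  rw [mem_image_shiftIdx] at hk
  obtain ⟨hk1, hk2⟩ := hk
  have := hS hk2
  rw [Finset.mem_range] at this
  rw [Finset.mem_erase, Finset.mem_range]
  refine ⟨hk1, ?_⟩
  unfold unshiftIdx at this
  split at this <;> omega

lemma image_unshift_mem_powerset {n i : ℕ} (hi : i < n) {S : Finset ℕ}
    (hS : S ∈ ((Finset.range n).erase i).powerset) :
    S.image (unshiftIdx i) ∈ (Finset.range (n-1)).powerset := by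
  rw [Finset.mem_powerset] at *
  intro k hk
  rw [Finset.mem_image] at hk
  obtain ⟨m, hm, rfl⟩ := hk
  have := hS hm
  rw [Finset.mem_erase, Finset.mem_range] at this
  rw [Finset.mem_range]
  unfold unshiftIdx
  split <;> omega

lemma image_unshift_image_shift (i : ℕ) (S : Finset ℕ) :
    (S.image (shiftIdx i)).image (unshiftIdx i) = S := by
  rw [Finset.image_image]
  have e : (unshiftIdx i ∘ shiftIdx i) = id := funext (unshift_shift i)
  rw [e, Finset.image_id]

lemma image_shift_image_unshift {i : ℕ} {S : Finset ℕ} (hS : i ∉ S) :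
    (S.image (unshiftIdx i)).image (shiftIdx i) = S := by
  rw [Finset.image_image]
  have e : ∀ k ∈ S, (shiftIdx i ∘ unshiftIdx i) k = id k := by
    intro k hk
    exact shift_unshift i k (fun hh => hS (hh ▸ hk))
  rw [Finset.image_congr e, Finset.image_id]

lemma shift_mem_erase {n i m : ℕ} (hi : i < n) (hm : m ∈ Finset.range (n-1)) :
    shiftIdx i m ∈ (Finset.range n).erase i := by
  rw [Finset.mem_range] at hm
  rw [Finset.mem_erase, Finset.mem_range]
  refine ⟨shiftIdx_ne i m, ?_⟩
  unfold shiftIdx; split <;> omega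

lemma unshift_mem_range {n i k : ℕ} (hi : i < n) (hk : k ∈ (Finset.range n).erase i) :
    unshiftIdx i k ∈ Finset.range (n-1) := by
  rw [Finset.mem_erase, Finset.mem_range] at hk
  rw [Finset.mem_range]
  unfold unshiftIdx; split <;> omega

lemma sum_erase_swap (s : Finset ℕ) (f : ℕ → ℕ → ℝ) :
    ∑ i ∈ s, ∑ j ∈ s.erase i, f i j = ∑ i ∈ s, ∑ j ∈ s.erase i, f j i := by
  have key : ∀ g : ℕ → ℕ → ℝ, ∑ i ∈ s, ∑ j ∈ s.erase i, g i j
      = ∑ i ∈ s, ∑ j ∈ s, if j ≠ i then g i j else 0 := by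
    intro g
    refine Finset.sum_congr rfl fun i _ => ?_
    rw [← Finset.filter_ne' s i, Finset.sum_filter]
  rw [key, key]
  rw [Finset.sum_comm]
  refine Finset.sum_congr rfl fun i _ => Finset.sum_congr rfl fun j _ => ?_
  by_cases hij : i = j <;> simp [hij, Ne.symm]

lemma sum_range_getD (L : List ℤ) : ∑ i ∈ Finset.range L.length, L.getD i 0 = L.sum := by
  induction L with
  | nil => rfl
  | cons a l ih =>
    rw [List.length_cons, Finset.sum_range_succ', List.sum_cons]
    simp only [List.getD_cons_succ, List.getD_cons_zero, ih]
    ring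

lemma two_mul_kerR (L1 Lm p : ℝ) (h : L1 ≠ 0) :
    2 * L1 * kerR L1 Lm p = ramp (L1+Lm-p) - ramp (Lm-L1-p) + ramp (L1-Lm-p) := by
  unfold kerR
  have e : -L1+Lm-p = Lm-L1-p := by ring
  rw [e]
  field_simp

lemma two_mul_kerE (L1 p : ℝ) (h : L1 ≠ 0) : 2 * L1 * kerE L1 p = ramp (L1-p) := by
  unfold kerE; field_simp

lemma two_mul_kerD (L1 p q : ℝ) (h : L1 ≠ 0) :
    2 * L1 * kerD L1 p q = 2 * ramp (L1-p-q) := by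
  unfold kerD; field_simp

lemma removeIdxs_singleton {α : Type*} (L : List α) (i : ℕ) :
    removeIdxs L {i} = L.eraseIdx i := by
  rw [removeIdxs_eq_selP, eraseIdx_eq_selP]
  apply selP_congr
  intro k _
  simp

lemma unshift_eq_iff (i k m : ℕ) (hk : k ≠ i) : unshiftIdx i k = m ↔ k = shiftIdx i m := by
  constructor
  · intro hh; rw [← hh, shift_unshift i k hk]
  · intro hh; rw [hh, unshift_shift]

lemma eraseIdx_eraseIdx (L : List ℤ) (i m : ℕ) :
    (L.eraseIdx i).eraseIdx m = removeIdxs L {i, shiftIdx i m} := by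
  rw [eraseIdx_eq_selP (L.eraseIdx i), selP_eraseIdx, removeIdxs_eq_selP]
  apply selP_congr
  intro k _
  by_cases h1 : k = i
  · simp [h1]
  · have h2 : (if k < i then k else k - 1) = unshiftIdx i k := rfl
    rw [h2]
    have h3 := unshift_eq_iff i k m h1
    by_cases h4 : k = shiftIdx i m
    · simp only [h1, h4, decide_eq_true_eq] at *
      simp [h4]
      exact fun _ => unshift_shift i m
    · simp [h1, h4]
      exact fun hh => h4 (h3.mp hh)

lemma selectIdxs_eraseIdx (L : List ℤ) (i : ℕ) (S : Finset ℕ) :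
    selectIdxs (L.eraseIdx i) S = selectIdxs L (S.image (shiftIdx i)) := by
  rw [selectIdxs_eq_selP, selP_eraseIdx, selectIdxs_eq_selP]
  apply selP_congr
  intro k _
  have h2 : (if k < i then k else k - 1) = unshiftIdx i k := rfl
  rw [h2]
  by_cases h1 : k = i
  · simp [h1]
    exact fun x _ => shiftIdx_ne i x
  · simp [h1]
    constructor
    · intro hh
      exact ⟨unshiftIdx i k, hh, shift_unshift i k h1⟩
    · rintro ⟨a, ha, rfl⟩
      rw [unshift_shift]; exact ha

lemma removeIdxs_eraseIdx (L : List ℤ) (i : ℕ) (S : Finset ℕ) :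
    removeIdxs (L.eraseIdx i) S =
      selectIdxs L (((Finset.range L.length).erase i) \ S.image (shiftIdx i)) := by
  rw [removeIdxs_eq_selP, selP_eraseIdx, selectIdxs_eq_selP]
  apply selP_congr
  intro k hk
  have h2 : (if k < i then k else k - 1) = unshiftIdx i k := rfl
  rw [h2]
  by_cases h1 : k = i
  · simp [h1, Finset.mem_sdiff]
  · by_cases h4 : unshiftIdx i k ∈ S
    · simp [h1, h4, Finset.mem_sdiff]
      exact fun _ => ⟨unshiftIdx i k, h4, shift_unshift i k h1⟩
    · simp [h1, h4, Finset.mem_sdiff, hk]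
      intro x hx hxk
      exact h4 (by rw [← hxk, unshift_shift]; exact hx)

lemma getD_eraseIdx (L : List ℤ) (i m : ℕ) :
    (L.eraseIdx i).getD m 0 = L.getD (shiftIdx i m) 0 := by
  rw [List.getD_eq_getElem?_getD, List.getD_eq_getElem?_getD, List.getElem?_eraseIdx]
  unfold shiftIdx
  split <;> rfl

lemma perm_getD_cons_eraseIdx : ∀ (L : List ℤ) (i : ℕ), i < L.length →
    L.Perm (L.getD i 0 :: L.eraseIdx i) := by
  intro L
  induction L with
  | nil => intro i hi; simp at hi
  | cons a l ih =>
    intro i hi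
    cases i with
    | zero => simp
    | succ i =>
      have hi' : i < l.length := by simpa using hi
      have h1 := (ih i hi').cons a
      have h2 := List.Perm.swap (l.getD i 0) a (l.eraseIdx i)
      simpa using h1.trans h2

lemma R_cancel (f : ℕ → ℤ) (X : ℕ → ℕ → ℤ → ℝ) (hX : ∀ i j, X i j = X j i) (s : Finset ℕ) :
    (∑ i ∈ s, ∑ j ∈ s.erase i, ∑ p ∈ Finset.Icc 1 (f i + f j),
      (p : ℝ) * (ramp (((f i : ℤ) : ℝ) + ((f j : ℤ) : ℝ) - (p : ℝ))
        - ramp (((f j : ℤ) : ℝ) - ((f i : ℤ) : ℝ) - (p : ℝ))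
        + ramp (((f i : ℤ) : ℝ) - ((f j : ℤ) : ℝ) - (p : ℝ))) * X i j p)
    = ∑ i ∈ s, ∑ j ∈ s.erase i, ∑ p ∈ Finset.Icc 1 (f i + f j),
      (p : ℝ) * ramp (((f i : ℤ) : ℝ) + ((f j : ℤ) : ℝ) - (p : ℝ)) * X i j p := by
  set U : ℕ → ℕ → ℝ := fun i j => ∑ p ∈ Finset.Icc 1 (f i + f j),
      (p : ℝ) * ramp (((f i : ℤ) : ℝ) + ((f j : ℤ) : ℝ) - (p : ℝ)) * X i j p with hU
  set V : ℕ → ℕ → ℝ := fun i j => ∑ p ∈ Finset.Icc 1 (f i + f j),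
      (p : ℝ) * ramp (((f i : ℤ) : ℝ) - ((f j : ℤ) : ℝ) - (p : ℝ)) * X i j p with hV
  have hinner : ∀ i j, (∑ p ∈ Finset.Icc 1 (f i + f j),
      (p : ℝ) * (ramp (((f i : ℤ) : ℝ) + ((f j : ℤ) : ℝ) - (p : ℝ))
        - ramp (((f j : ℤ) : ℝ) - ((f i : ℤ) : ℝ) - (p : ℝ))
        + ramp (((f i : ℤ) : ℝ) - ((f j : ℤ) : ℝ) - (p : ℝ))) * X i j p)
      = U i j - V j i + V i j := by
    intro i j
    have hVji : V j i = ∑ p ∈ Finset.Icc 1 (f i + f j),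
        (p : ℝ) * ramp (((f j : ℤ) : ℝ) - ((f i : ℤ) : ℝ) - (p : ℝ)) * X i j p := by
      rw [hV]
      simp only []
      rw [add_comm (f j) (f i), hX j i]
    rw [hU, hVji, hV]
    simp only []
    rw [← Finset.sum_sub_distrib, ← Finset.sum_add_distrib]
    refine Finset.sum_congr rfl fun p _ => ?_
    ring
  calc (∑ i ∈ s, ∑ j ∈ s.erase i, ∑ p ∈ Finset.Icc 1 (f i + f j),
      (p : ℝ) * (ramp (((f i : ℤ) : ℝ) + ((f j : ℤ) : ℝ) - (p : ℝ))
        - ramp (((f j : ℤ) : ℝ) - ((f i : ℤ) : ℝ) - (p : ℝ))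
        + ramp (((f i : ℤ) : ℝ) - ((f j : ℤ) : ℝ) - (p : ℝ))) * X i j p)
      = ∑ i ∈ s, ∑ j ∈ s.erase i, (U i j - V j i + V i j) := by
        exact Finset.sum_congr rfl fun i _ => Finset.sum_congr rfl fun j _ => hinner i j
    _ = (∑ i ∈ s, ∑ j ∈ s.erase i, U i j) - (∑ i ∈ s, ∑ j ∈ s.erase i, V j i)
        + ∑ i ∈ s, ∑ j ∈ s.erase i, V i j := by
        rw [← Finset.sum_sub_distrib, ← Finset.sum_add_distrib]
        refine Finset.sum_congr rfl fun i _ => ?_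
        rw [← Finset.sum_sub_distrib, ← Finset.sum_add_distrib]
    _ = ∑ i ∈ s, ∑ j ∈ s.erase i, U i j := by
        rw [sum_erase_swap s (fun i j => V j i)]
        ring

end Aux


lemma main_step (b : ℝ) (N : ℤ → List ℤ → ℝ)
    (hsym : ∀ (h : ℤ) (L L' : List ℤ), L.Perm L' → N h L = N h L')
    (hrec : AsymRecursion b N)
    (h : ℤ) (L : List ℤ) (hpos : ∀ x ∈ L, 0 < x)
    (hbig : 3 < h + (L.length : ℤ)) (heven : Even L.sum)
    (i : ℕ) (hi : i < L.length) :
    2 * ((L.getD i 0 : ℤ) : ℝ) * N h L =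
      (∑ j ∈ (Finset.range L.length).erase i, ∑ p ∈ Finset.Icc 1 (L.getD i 0 + L.getD j 0),
        (p : ℝ) * (ramp (((L.getD i 0 : ℤ) : ℝ) + ((L.getD j 0 : ℤ) : ℝ) - (p : ℝ))
          - ramp (((L.getD j 0 : ℤ) : ℝ) - ((L.getD i 0 : ℤ) : ℝ) - (p : ℝ))
          + ramp (((L.getD i 0 : ℤ) : ℝ) - ((L.getD j 0 : ℤ) : ℝ) - (p : ℝ))) *
          N h (p :: removeIdxs L {i, j}))
      + b * (∑ p ∈ Finset.Icc 1 (L.getD i 0),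
          (p : ℝ) * (((L.getD i 0 : ℤ) : ℝ) - 1) *
            ramp (((L.getD i 0 : ℤ) : ℝ) - (p : ℝ)) * N (h - 1) (p :: removeIdxs L {i}))
      + ∑ p ∈ Finset.Icc 1 (L.getD i 0), ∑ q ∈ Finset.Icc 1 (L.getD i 0),
          (p : ℝ) * (q : ℝ) * ramp (((L.getD i 0 : ℤ) : ℝ) - (p : ℝ) - (q : ℝ)) *
            ((1 + b) * N (h - 2) (p :: q :: removeIdxs L {i})
              + 2 * ∑ h1 ∈ Finset.Icc 0 h,
                  ∑ S ∈ ((Finset.range L.length).erase i).powerset,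
                    N h1 (p :: selectIdxs L S) *
                      N (h - h1) (q :: selectIdxs L (((Finset.range L.length).erase i) \ S))) := by
  set c : ℤ := L.getD i 0 with hc
  have hperm : L.Perm (c :: L.eraseIdx i) := perm_getD_cons_eraseIdx L i hi
  have hcpos : 0 < c := hpos _ (hperm.symm.subset List.mem_cons_self)
  have hc0 : ((c : ℤ) : ℝ) ≠ 0 := by
    push_cast
    exact_mod_cast hcpos.ne'
  have hTpos : ∀ x ∈ L.eraseIdx i, 0 < x := fun x hx =>
    hpos x ((List.eraseIdx_sublist L i).subset hx)
  have hlenT : (L.eraseIdx i).length = L.length - 1 := by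
    rw [List.length_eraseIdx]
    simp [hi]
  have hbig' : 3 < h + (1 + ((L.eraseIdx i).length : ℤ)) := by
    rw [hlenT]
    have h1 : 1 ≤ L.length := by omega
    rw [Nat.cast_sub h1]
    push_cast
    omega
  have heven' : Even (c + (L.eraseIdx i).sum) := by
    have hs := hperm.sum_eq
    rw [List.sum_cons] at hs
    rw [← hs]
    exact heven
  have hr := hrec h c (L.eraseIdx i) hcpos hTpos hbig' heven'
  unfold AsymRecAt at hr
  have hNL : N h L = N h (c :: L.eraseIdx i) := hsym _ _ _ hperm
  rw [hNL, hr, mul_add, mul_add]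
  congr 1
  · congr 1
    -- R part
    · rw [Finset.mul_sum, hlenT]
      refine Finset.sum_nbij' (fun m => shiftIdx i m) (fun k => unshiftIdx i k)
        (fun m hm => shift_mem_erase hi hm) (fun k hk => unshift_mem_range hi hk)
        (fun m _ => unshift_shift i m) (fun k hk => shift_unshift i k (Finset.mem_erase.mp hk).1)
        (fun m _ => ?_)
      rw [getD_eraseIdx L i m, eraseIdx_eraseIdx L i m, Finset.mul_sum]
      refine Finset.sum_congr rfl fun p _ => ?_
      rw [show 2 * ((c : ℤ) : ℝ) * ((p : ℝ) * kerR ((c : ℤ) : ℝ) ((L.getD (shiftIdx i m) 0 : ℤ) : ℝ) (p : ℝ)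
            * N h (p :: removeIdxs L {i, shiftIdx i m}))
          = (p : ℝ) * (2 * ((c : ℤ) : ℝ) * kerR ((c : ℤ) : ℝ) ((L.getD (shiftIdx i m) 0 : ℤ) : ℝ) (p : ℝ))
            * N h (p :: removeIdxs L {i, shiftIdx i m}) from by ring,
        two_mul_kerR _ _ _ hc0]
    -- E part
    · rw [removeIdxs_singleton, mul_left_comm]
      congr 1
      rw [Finset.mul_sum]
      refine Finset.sum_congr rfl fun p _ => ?_
      rw [show 2 * ((c : ℤ) : ℝ) * ((p : ℝ) * (((c : ℤ) : ℝ) - 1) * kerE ((c : ℤ) : ℝ) (p : ℝ)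
            * N (h - 1) (p :: L.eraseIdx i))
          = (p : ℝ) * (((c : ℤ) : ℝ) - 1) * (2 * ((c : ℤ) : ℝ) * kerE ((c : ℤ) : ℝ) (p : ℝ))
            * N (h - 1) (p :: L.eraseIdx i) from by ring,
        two_mul_kerE _ _ hc0]
  -- D part
  · rw [removeIdxs_singleton, Finset.mul_sum]
    refine Finset.sum_congr rfl fun p _ => ?_
    rw [Finset.mul_sum]
    refine Finset.sum_congr rfl fun q _ => ?_
    have hW : (∑ h1 ∈ Finset.Icc 0 h, ∑ S ∈ (Finset.range (L.eraseIdx i).length).powerset,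
          N h1 (p :: selectIdxs (L.eraseIdx i) S) * N (h - h1) (q :: removeIdxs (L.eraseIdx i) S))
        = ∑ h1 ∈ Finset.Icc 0 h, ∑ S ∈ ((Finset.range L.length).erase i).powerset,
            N h1 (p :: selectIdxs L S) *
              N (h - h1) (q :: selectIdxs L (((Finset.range L.length).erase i) \ S)) := by
      refine Finset.sum_congr rfl fun h1 _ => ?_
      rw [hlenT]
      refine Finset.sum_nbij' (fun S => S.image (shiftIdx i)) (fun S => S.image (unshiftIdx i))
        (fun S hS => image_shift_mem_powerset hi hS)
        (fun S hS => image_unshift_mem_powerset hi hS)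
        (fun S _ => image_unshift_image_shift i S)
        (fun S hS => image_shift_image_unshift
          (fun hiS => ((Finset.mem_erase.mp ((Finset.mem_powerset.mp hS) hiS)).1) rfl))
        (fun S _ => ?_)
      rw [selectIdxs_eraseIdx L i S, removeIdxs_eraseIdx L i S]
    rw [hW]
    rw [show 2 * ((c : ℤ) : ℝ) * ((p : ℝ) * (q : ℝ) * kerD ((c : ℤ) : ℝ) (p : ℝ) (q : ℝ) *
          ((1 + b) / 2 * N (h - 2) (p :: q :: L.eraseIdx i)
            + ∑ h1 ∈ Finset.Icc 0 h, ∑ S ∈ ((Finset.range L.length).erase i).powerset,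
                N h1 (p :: selectIdxs L S) *
                  N (h - h1) (q :: selectIdxs L (((Finset.range L.length).erase i) \ S))))
        = (p : ℝ) * (q : ℝ) * (2 * ((c : ℤ) : ℝ) * kerD ((c : ℤ) : ℝ) (p : ℝ) (q : ℝ)) *
          ((1 + b) / 2 * N (h - 2) (p :: q :: L.eraseIdx i)
            + ∑ h1 ∈ Finset.Icc 0 h, ∑ S ∈ ((Finset.range L.length).erase i).powerset,
                N h1 (p :: selectIdxs L S) *
                  N (h - h1) (q :: selectIdxs L (((Finset.range L.length).erase i) \ S)))
        from by ring,
      two_mul_kerD _ _ _ hc0]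
    ring


/-- If a refined lattice family is symmetric in its arguments and
satisfies the asymmetric recursion at every `(g,n,L)` with `2g-2+n > 1` and even total
boundary length, then it satisfies the symmetric recursion at every such `(g,n,L)`. -/
theorem symRec_of_asymRec (b : ℝ) (N : ℤ → List ℤ → ℝ)
    (hzero : ZeroConvention N)
    (hsym : ∀ (h : ℤ) (L L' : List ℤ), L.Perm L' → N h L = N h L')
    (hrec : AsymRecursion b N) :
    ∀ (h : ℤ) (L : List ℤ), (∀ x ∈ L, 0 < x) → 0 < L.length →
      3 < h + (L.length : ℤ) → Even L.sum → SymRecAt b N h L := by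
  intro h L hpos hlen hbig heven
  unfold SymRecAt
  have hLsum : ((L.sum : ℤ) : ℝ) = ∑ i ∈ Finset.range L.length, ((L.getD i 0 : ℤ) : ℝ) := by
    rw [← sum_range_getD L]
    push_cast
    rfl
  have hmain := fun (i : ℕ) (hi : i ∈ Finset.range L.length) =>
    main_step b N hsym hrec h L hpos hbig heven i (Finset.mem_range.mp hi)
  calc 2 * ((L.sum : ℤ) : ℝ) * N h L
      = ∑ i ∈ Finset.range L.length, 2 * ((L.getD i 0 : ℤ) : ℝ) * N h L := by
        rw [hLsum, Finset.mul_sum, Finset.sum_mul]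
    _ = _ := by
        rw [Finset.sum_congr rfl hmain, Finset.sum_add_distrib, Finset.sum_add_distrib]
        congr 1
        · congr 1
          · exact R_cancel (fun i => L.getD i 0) (fun i j p => N h (p :: removeIdxs L {i, j}))
              (fun i j => funext fun p => by
                show N h (p :: removeIdxs L {i, j}) = N h (p :: removeIdxs L {j, i})
                rw [Finset.pair_comm]) (Finset.range L.length)
          · rw [← Finset.mul_sum]

end
end

section
/- Let b ∈ ℝ and let N and N′ be two parity-supported refined lattice families, both satisfying the initial conditions, and suppose that for every (g,n) with 2g−2+n > 1 and every L ∈ (ℤ_{>0})^n with L₁+⋯+L_n even, both families satisfy the symmetric recursion: 2(Σ_{i=1}^n L_i)·N_{g,n}(L) = Σ_{i≠j} Σ_{p>0} p·[L_i+L_j−p]_+ · N_{g,n−1}(p, L with L_i and L_j removed) + b·Σ_{i=1}^n Σ_{p>0} p(L_i−1)·[L_i−p]_+ · N_{g−1/2,n}(p, L with L_i removed) + Σ_{i=1}^n Σ_{p,q>0} pq·[L_i−p−q]_+ · ( (1+b)·N_{g−1,n+1}(p,q, L with L_i removed) + 2·Σ_{g₁+g₂=g, I₁⊔I₂=[n]∖{i}}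 N_{g₁,1+|I₁|}(p,L_{I₁})·N_{g₂,1+|I₂|}(q,L_{I₂}) ). Then N = N′. -/
open scoped BigOperators

noncomputable section

/-- The family satisfies the symmetric recursion at every `(g, n, L)` with
`2g - 2 + n > 1`, `L ∈ (ℤ_{>0})ⁿ` and `L₁ + ⋯ + L_n` even. -/
def SymRecursion (b : ℝ) (N : ℤ → List ℤ → ℝ) : Prop :=
  ∀ (h : ℤ) (L : List ℤ), (∀ x ∈ L, 0 < x) → 0 < L.length →
    3 < h + (L.length : ℤ) → Even L.sum → SymRecAt b N h L

namespace SRAux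

variable {α : Type*}

lemma len_add (L : List α) (S : Finset ℕ) :
    (selectIdxs L S).length + (removeIdxs L S).length = L.length := by
  unfold selectIdxs removeIdxs
  rw [← List.length_zipIdx (l := L) (i := 0)]
  generalize L.zipIdx = l
  induction l with
  | nil => simp
  | cons p t ih =>
    simp only [List.filterMap_cons]
    by_cases h : p.2 ∈ S
    · rw [if_pos h, if_pos h]; simp only [List.length_cons]; omega
    · rw [if_neg h, if_neg h]; simp only [List.length_cons]; omega

lemma len_union (L : List α) {S S' : Finset ℕ} (hd : Disjoint S S') :
    (selectIdxs L (S ∪ S')).length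
      = (selectIdxs L S).length + (selectIdxs L S').length := by
  unfold selectIdxs
  generalize L.zipIdx = l
  induction l with
  | nil => simp
  | cons p t ih =>
    simp only [List.filterMap_cons]
    by_cases h1 : p.2 ∈ S
    · have h2 : p.2 ∉ S' := Finset.disjoint_left.mp hd h1
      rw [if_pos (Finset.mem_union_left _ h1), if_pos h1, if_neg h2]
      simp only [List.length_cons]; omega
    · by_cases h2 : p.2 ∈ S'
      · rw [if_pos (Finset.mem_union_right _ h2), if_neg h1, if_pos h2]
        simp only [List.length_cons]; omega
      · rw [if_neg (by simp [h1, h2]), if_neg h1, if_neg h2]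
        exact ih

lemma len_le (L : List α) (S : Finset ℕ) : (selectIdxs L S).length ≤ L.length := by
  have := len_add L S; omega

lemma len_pos {L : List α} {S : Finset ℕ} {i : ℕ} (hi : i < L.length) (hiS : i ∈ S) :
    0 < (selectIdxs L S).length := by
  have hmem : L[i] ∈ selectIdxs L S := by
    unfold selectIdxs
    apply List.mem_filterMap.mpr
    refine ⟨(L[i], i), ?_, by simp [hiS]⟩
    have : L.zipIdx[i]'(by simpa using hi) = (L[i], i) := by simp
    rw [← this]; exact List.getElem_mem _
  exact List.length_pos_iff.mpr (List.ne_nil_of_mem hmem)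

lemma len_lt {L : List α} {S : Finset ℕ} {i : ℕ} (hi : i < L.length) (hiS : i ∉ S) :
    (selectIdxs L S).length + 1 ≤ L.length := by
  have hd : Disjoint S {i} := by simp [Finset.disjoint_right, hiS]
  have h1 := len_union L hd
  have h2 := len_le L (S ∪ {i})
  have h3 : 0 < (selectIdxs L ({i} : Finset ℕ)).length :=
    len_pos hi (Finset.mem_singleton_self i)
  omega

lemma rem_pos {L : List α} {S : Finset ℕ} {i : ℕ} (hi : i < L.length) (hiS : i ∉ S) :
    (selectIdxs L S).length + (removeIdxs L S).length = L.length ∧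
      0 < (removeIdxs L S).length := by
  have := len_add L S
  have := len_lt hi hiS
  exact ⟨by omega, by omega⟩

lemma mem_sel {L : List α} {S : Finset ℕ} {x : α} (hx : x ∈ selectIdxs L S) : x ∈ L := by
  unfold selectIdxs at hx
  obtain ⟨p, hp, hpx⟩ := List.mem_filterMap.mp hx
  have : p.1 = x := by by_cases h : p.2 ∈ S <;> simp [h] at hpx; exact hpx
  subst this
  have := List.mem_zipIdx_iff_getElem?.mp hp
  exact List.mem_of_getElem? this

lemma mem_rem {L : List α} {S : Finset ℕ} {x : α} (hx : x ∈ removeIdxs L S) : x ∈ L := by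
  unfold removeIdxs at hx
  obtain ⟨p, hp, hpx⟩ := List.mem_filterMap.mp hx
  have : p.1 = x := by by_cases h : p.2 ∈ S <;> simp [h] at hpx; exact hpx
  subst this
  have := List.mem_zipIdx_iff_getElem?.mp hp
  exact List.mem_of_getElem? this

lemma rem_pair_len {L : List α} {i j : ℕ} (hi : i < L.length) (hj : j < L.length)
    (hij : i ≠ j) : (removeIdxs L {i, j}).length + 2 ≤ L.length := by
  have hadd := len_add L ({i, j} : Finset ℕ)
  have hd : Disjoint ({i} : Finset ℕ) {j} := by simp [Finset.disjoint_left, hij]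
  have hu : ({i} : Finset ℕ) ∪ {j} = {i, j} := by
    ext x; simp [Finset.mem_insert]
  have := len_union L hd
  rw [hu] at this
  have h1 := len_pos hi (Finset.mem_singleton_self i)
  have h2 := len_pos hj (Finset.mem_singleton_self j)
  omega

lemma rem_single_len {L : List α} {i : ℕ} (hi : i < L.length) :
    (removeIdxs L {i}).length + 1 ≤ L.length := by
  have hadd := len_add L ({i} : Finset ℕ)
  have h1 := len_pos hi (Finset.mem_singleton_self i)
  omega

lemma sel_split_len {L : List α} {i : ℕ} (hi : i < L.length) (S : Finset ℕ)
    (hS : S ⊆ (Finset.range L.length).erase i) :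
    (selectIdxs L S).length
      + (selectIdxs L ((Finset.range L.length).erase i \ S)).length + 1 ≤ L.length := by
  set E := (Finset.range L.length).erase i with hE
  have hd : Disjoint S (E \ S) := Finset.disjoint_sdiff
  have hu : S ∪ (E \ S) = E := Finset.union_sdiff_of_subset hS
  have h1 := len_union L hd
  rw [hu] at h1
  have h2 : i ∉ E := Finset.notMem_erase i _
  have h3 := len_lt hi h2
  omega

end SRAux

/-- Two parity-supported refined lattice families satisfying the
initial conditions and the symmetric recursion agree on all stable `(g,n)` and all
tuples of positive integers. -/
theorem symRec_unique (b : ℝ) (N N' : ℤ → List ℤ → ℝ)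
    (hzero : ZeroConvention N) (hzero' : ZeroConvention N')
    (hpar : ParitySupported N) (hpar' : ParitySupported N')
    (hinit : InitialConditions b N) (hinit' : InitialConditions b N')
    (hrec : SymRecursion b N) (hrec' : SymRecursion b N') :
    ∀ (h : ℤ) (L : List ℤ), (∀ x ∈ L, 0 < x) → 0 < L.length →
      2 < h + (L.length : ℤ) → N h L = N' h L := by
  suffices H : ∀ k : ℕ, ∀ (h : ℤ) (L : List ℤ), (∀ x ∈ L, 0 < x) → 0 < L.length →
      2 < h + (L.length : ℤ) → h + (L.length : ℤ) ≤ (k : ℤ) → N h L = N' h L by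
    intro h L h1 h2 h3
    exact H (h + L.length).toNat h L h1 h2 h3 (by omega)
  intro k
  induction k using Nat.strong_induction_on with
  | _ k IH =>
  intro h L hpos hlen hstab hk
  by_cases hH : h < 0
  · rw [hzero h L (Or.inl hH), hzero' h L (Or.inl hH)]
  push_neg at hH
  by_cases hbase : h + (L.length : ℤ) ≤ 3
  · rcases L with _ | ⟨a, _ | ⟨a2, _ | ⟨a3, _ | ⟨a4, t⟩⟩⟩⟩
    · simp at hlen
    · have h2 : h = 2 := by simp only [List.length_cons, List.length_nil] at hstab hbase; omega
      subst h2
      rw [hinit.2.2 a (hpos a (by simp)), hinit'.2.2 a (hpos a (by simp))]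
    · have h1 : h = 1 := by simp only [List.length_cons, List.length_nil] at hstab hbase; omega
      subst h1
      rw [hinit.2.1 a a2 (hpos a (by simp)) (hpos a2 (by simp)),
        hinit'.2.1 a a2 (hpos a (by simp)) (hpos a2 (by simp))]
    · have h0 : h = 0 := by simp only [List.length_cons, List.length_nil] at hstab hbase; omega
      subst h0
      rw [hinit.1 a a2 a3 (hpos a (by simp)) (hpos a2 (by simp)) (hpos a3 (by simp)),
        hinit'.1 a a2 a3 (hpos a (by simp)) (hpos a2 (by simp)) (hpos a3 (by simp))]
    · exfalso
      simp only [List.length_cons] at hbase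
      omega
  push_neg at hbase
  by_cases hev : Even L.sum
  case neg => rw [hpar h L hpos hev, hpar' h L hpos hev]
  have agree : ∀ (h' : ℤ) (L' : List ℤ), (∀ x ∈ L', 0 < x) → 0 < L'.length →
      h' + (L'.length : ℤ) ≤ h + (L.length : ℤ) - 1 → N h' L' = N' h' L' := by
    intro h' L' hp' hl' hb'
    by_cases hc : h' < 0 ∨ h' + (L'.length : ℤ) ≤ 2
    · rw [hzero _ _ hc, hzero' _ _ hc]
    push_neg at hc
    have hk1 : k - 1 < k := by omega
    exact IH (k - 1) hk1 h' L' hp' hl' (by omega) (by omega)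
  have e1 := hrec h L hpos hlen hbase hev
  have e2 := hrec' h L hpos hlen hbase hev
  unfold SymRecAt at e1 e2
  have hsum : (0 : ℝ) < 2 * (L.sum : ℝ) := by
    have : 0 < L.sum := List.sum_pos L hpos (List.ne_nil_of_length_pos hlen)
    have : (0 : ℝ) < (L.sum : ℝ) := by exact_mod_cast this
    linarith
  apply mul_left_cancel₀ (ne_of_gt hsum)
  rw [e1, e2]
  congr 1
  · congr 1
    · -- first big sum
      refine Finset.sum_congr rfl fun i hi => Finset.sum_congr rfl fun j hj =>
        Finset.sum_congr rfl fun p hp => ?_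
      have hij : j ≠ i := (Finset.mem_erase.mp hj).1
      have hi' : i < L.length := Finset.mem_range.mp hi
      have hj' : j < L.length := Finset.mem_range.mp (Finset.mem_erase.mp hj).2
      have hp1 : 1 ≤ p := (Finset.mem_Icc.mp hp).1
      have hlen2 := SRAux.rem_pair_len hi' hj' (Ne.symm hij)
      rw [agree h (p :: removeIdxs L {i, j}) ?_ (by simp) ?_]
      · intro x hx
        rcases List.mem_cons.mp hx with rfl | hx
        · omega
        · exact hpos x (SRAux.mem_rem hx)
      · simp only [List.length_cons]
        push_cast
        omega
    · -- second big sum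
      congr 1
      refine Finset.sum_congr rfl fun i hi => Finset.sum_congr rfl fun p hp => ?_
      have hi' : i < L.length := Finset.mem_range.mp hi
      have hp1 : 1 ≤ p := (Finset.mem_Icc.mp hp).1
      have hlen2 := SRAux.rem_single_len hi'
      rw [agree (h - 1) (p :: removeIdxs L {i}) ?_ (by simp) ?_]
      · intro x hx
        rcases List.mem_cons.mp hx with rfl | hx
        · omega
        · exact hpos x (SRAux.mem_rem hx)
      · simp only [List.length_cons]
        push_cast
        omega
  · -- third big sum
    refine Finset.sum_congr rfl fun i hi => Finset.sum_congr rfl fun p hp =>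
      Finset.sum_congr rfl fun q hq => ?_
    have hi' : i < L.length := Finset.mem_range.mp hi
    have hp1 : 1 ≤ p := (Finset.mem_Icc.mp hp).1
    have hq1 : 1 ≤ q := (Finset.mem_Icc.mp hq).1
    have hlen2 := SRAux.rem_single_len hi'
    have hA : N (h - 2) (p :: q :: removeIdxs L {i}) = N' (h - 2) (p :: q :: removeIdxs L {i}) := by
      apply agree
      · intro x hx
        rcases List.mem_cons.mp hx with rfl | hx
        · omega
        rcases List.mem_cons.mp hx with rfl | hx
        · omega
        · exact hpos x (SRAux.mem_rem hx)
      · simp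
      · simp only [List.length_cons]
        push_cast
        omega
    have hB : ∀ h1 ∈ Finset.Icc 0 h, ∀ S ∈ ((Finset.range L.length).erase i).powerset,
        N h1 (p :: selectIdxs L S) *
            N (h - h1) (q :: selectIdxs L ((Finset.range L.length).erase i \ S))
          = N' h1 (p :: selectIdxs L S) *
            N' (h - h1) (q :: selectIdxs L ((Finset.range L.length).erase i \ S)) := by
      intro h1 hh1 S hS
      have hSE : S ⊆ (Finset.range L.length).erase i := Finset.mem_powerset.mp hS
      have hkey := SRAux.sel_split_len hi' S hSE
      set X := p :: selectIdxs L S with hX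
      set Y := q :: selectIdxs L ((Finset.range L.length).erase i \ S) with hY
      have hXlen : (X.length : ℤ) = 1 + (selectIdxs L S).length := by simp [hX]; omega
      have hYlen : (Y.length : ℤ) =
          1 + (selectIdxs L ((Finset.range L.length).erase i \ S)).length := by simp [hY]; omega
      by_cases c1 : h1 + (X.length : ℤ) ≤ 2
      · rw [hzero h1 X (Or.inr c1), hzero' h1 X (Or.inr c1), zero_mul, zero_mul]
      by_cases c2 : (h - h1) + (Y.length : ℤ) ≤ 2
      · rw [hzero (h - h1) Y (Or.inr c2), hzero' (h - h1) Y (Or.inr c2), mul_zero, mul_zero]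
      push_neg at c1 c2
      have hXpos : ∀ x ∈ X, 0 < x := by
        intro x hx
        rcases List.mem_cons.mp hx with rfl | hx
        · omega
        · exact hpos x (SRAux.mem_sel hx)
      have hYpos : ∀ x ∈ Y, 0 < x := by
        intro x hx
        rcases List.mem_cons.mp hx with rfl | hx
        · omega
        · exact hpos x (SRAux.mem_sel hx)
      rw [agree h1 X hXpos (by simp [hX]) (by omega),
        agree (h - h1) Y hYpos (by simp [hY]) (by omega)]
    rw [hA, Finset.sum_congr rfl fun h1 hh1 => Finset.sum_congr rfl fun S hS => hB h1 hh1 S hS]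


end
end

section
/- Let b ∈ ℝ and let N be a parity-supported refined lattice family satisfying the initial conditions and the asymmetric recursion at every (g,n,L) with 2g−2+n > 1 and L₁+⋯+L_n even. Then for every even L₁ ∈ ℤ_{>0}: N_{3/2,1}(L₁) = (b/46080)·(L₁²−4)·(L₁−4)·( (1+b)(17L₁²+38L₁−60) + 30b²(L₁²−L₁) ). -/
open scoped BigOperators

noncomputable section

lemma sum_Icc_shift (f : ℤ → ℝ) (c : ℤ) (n : ℕ) :
    ∑ p ∈ Finset.Icc (c+1) (c+(n:ℤ)), f p = ∑ k ∈ Finset.range n, f (c+1+(k:ℤ)) := by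
  have hset : Finset.Icc (c+1) (c+(n:ℤ))
      = Finset.map ⟨fun k : ℕ => c+1+(k:ℤ), by intro a b h; simp only [] at h; omega⟩
          (Finset.range n) := by
    ext x
    simp only [Finset.mem_Icc, Finset.mem_map, Finset.mem_range, Function.Embedding.coeFn_mk]
    constructor
    · intro h; exact ⟨(x - (c+1)).toNat, by omega, by change c+1+(((x - (c+1)).toNat : ℕ):ℤ) = x; omega⟩
    · rintro ⟨k, hk, rfl⟩; change c+1 ≤ c+1+(k:ℤ) ∧ c+1+(k:ℤ) ≤ c+(n:ℤ); omega
  rw [hset, Finset.sum_map]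
  rfl

lemma sum_Icc_one (f : ℤ → ℝ) (n : ℕ) :
    ∑ p ∈ Finset.Icc (1:ℤ) (n:ℤ), f p = ∑ k ∈ Finset.range n, f ((k:ℤ)+1) := by
  have := sum_Icc_shift f 0 n
  simp only [zero_add] at this
  rw [this]
  exact Finset.sum_congr rfl fun k _ => by rw [add_comm]

lemma sum_range_pair (f : ℕ → ℝ) : ∀ n : ℕ,
    ∑ k ∈ Finset.range (2*n), f k = ∑ a ∈ Finset.range n, (f (2*a) + f (2*a+1)) := by
  intro n
  induction n with
  | zero => simp
  | succ n ih =>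
      rw [Nat.mul_succ, Finset.sum_range_succ, Finset.sum_range_succ, Finset.sum_range_succ, ih]
      ring

lemma sum_range_pair' (f : ℕ → ℝ) (n : ℕ) :
    ∑ k ∈ Finset.range (2*n+1), f k
      = (∑ a ∈ Finset.range n, (f (2*a) + f (2*a+1))) + f (2*n) := by
  rw [Finset.sum_range_succ, sum_range_pair]

lemma neg_one_zpow_even (t : ℤ) : (-1:ℝ) ^ (2*t) = 1 := by
  rw [zpow_mul]; norm_num

lemma neg_one_zpow_odd (t : ℤ) : (-1:ℝ) ^ (2*t+1) = -1 := by
  rw [zpow_add₀ (by norm_num : (-1:ℝ) ≠ 0), neg_one_zpow_even]; norm_num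

lemma max_split (x y : ℝ) : max x y = x + max (y - x) 0 := by
  rcases le_total x y with h | h
  · rw [max_eq_right h, max_eq_left (by linarith)]; ring
  · rw [max_eq_left h, max_eq_right (by linarith)]; ring

lemma sumPA (c : ℝ) : ∀ n : ℕ,
    ∑ i ∈ Finset.range n, (2*(i:ℝ)+2)*(c-(2*(i:ℝ)+2))
      = (-2/3)*(n:ℝ) + (n:ℝ)*c + (-2)*(n:ℝ)^2 + (n:ℝ)^2*c + (-4/3)*(n:ℝ)^3 := by
  intro n
  induction n with
  | zero => simp
  | succ n ih => rw [Finset.sum_range_succ, ih]; push_cast; ring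

lemma sumPO (c : ℝ) : ∀ n : ℕ,
    ∑ i ∈ Finset.range n, (2*(i:ℝ)+1)*(c-(2*(i:ℝ)+1))
      = (1/3)*(n:ℝ) + (n:ℝ)^2*c + (-4/3)*(n:ℝ)^3 := by
  intro n
  induction n with
  | zero => simp
  | succ n ih => rw [Finset.sum_range_succ, ih]; push_cast; ring

lemma sumPC (c d : ℝ) : ∀ n : ℕ,
    ∑ i ∈ Finset.range n, (d+(2*(i:ℝ)+2))*(c-(2*(i:ℝ)+2))*(2*(i:ℝ)+2)
      = (-2/3)*(n:ℝ)*d + (2/3)*(n:ℝ)*c + (n:ℝ)*c*d + (-2)*(n:ℝ)^2 + (-2)*(n:ℝ)^2*d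
        + 2*(n:ℝ)^2*c + (n:ℝ)^2*c*d + (-4)*(n:ℝ)^3 + (-4/3)*(n:ℝ)^3*d + (4/3)*(n:ℝ)^3*c
        + (-2)*(n:ℝ)^4 := by
  intro n
  induction n with
  | zero => simp
  | succ n ih => rw [Finset.sum_range_succ, ih]; push_cast; ring

lemma sumPB (b X : ℝ) : ∀ n : ℕ,
    ∑ a ∈ Finset.range n, (2*(a:ℝ)+2)*(2*X-(2*(a:ℝ)+2))
          * ((1+b)*((2*(a:ℝ)+2)^2-4) + b^2*(5*(2*(a:ℝ)+2)^2-12*(2*(a:ℝ)+2)+4))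
      = (16/5)*(n:ℝ) + 8*(n:ℝ)^2 + (-8)*(n:ℝ)^4 + (-16/5)*(n:ℝ)^5 + (-8)*X*(n:ℝ)
        + (-4)*X*(n:ℝ)^2 + 8*X*(n:ℝ)^3 + 4*X*(n:ℝ)^4 + (16/5)*b*(n:ℝ) + 8*b*(n:ℝ)^2
        + (-8)*b*(n:ℝ)^4 + (-16/5)*b*(n:ℝ)^5 + (-8)*b*X*(n:ℝ) + (-4)*b*X*(n:ℝ)^2
        + 8*b*X*(n:ℝ)^3 + 4*b*X*(n:ℝ)^4 + 16*b^2*(n:ℝ)^2 + 16*b^2*(n:ℝ)^3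
        + (-16)*b^2*(n:ℝ)^4 + (-16)*b^2*(n:ℝ)^5 + (-8)*b^2*X*(n:ℝ) + (-20)*b^2*X*(n:ℝ)^2
        + 8*b^2*X*(n:ℝ)^3 + 20*b^2*X*(n:ℝ)^4 := by
  intro n
  induction n with
  | zero => simp
  | succ n ih => rw [Finset.sum_range_succ, ih]; push_cast; ring

lemma sumCD1 (X : ℝ) : ∀ n : ℕ,
    ∑ a ∈ Finset.range n,
      ( (2*(a:ℝ)+1)*(2*(a:ℝ))
          * ((1/3)*(X-(a:ℝ)) + (X-(a:ℝ))^2*(2*X-2*(a:ℝ)-1) + (-4/3)*(X-(a:ℝ))^3)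
        + (2*(a:ℝ)+2)*(2*(a:ℝ)+1)
          * ((-2/3)*(X-(a:ℝ)-1) + (X-(a:ℝ)-1)*(2*X-2*(a:ℝ)-2) + (-2)*(X-(a:ℝ)-1)^2
              + (X-(a:ℝ)-1)^2*(2*X-2*(a:ℝ)-2) + (-4/3)*(X-(a:ℝ)-1)^3) )
      = (-1/5)*(n:ℝ) + (-1/18)*(n:ℝ)^2 + (n:ℝ)^3 + (17/18)*(n:ℝ)^4 + (-4/5)*(n:ℝ)^5
        + (-8/9)*(n:ℝ)^6 + (11/45)*X*(n:ℝ) + (-1)*X*(n:ℝ)^2 + (-16/9)*X*(n:ℝ)^3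
        + 2*X*(n:ℝ)^4 + (16/5)*X*(n:ℝ)^5 + (1/3)*X^2*(n:ℝ) + X^2*(n:ℝ)^2
        + (-4/3)*X^2*(n:ℝ)^3 + (-4)*X^2*(n:ℝ)^4 + (-4/9)*X^3*(n:ℝ) + (16/9)*X^3*(n:ℝ)^3 := by
  intro n
  induction n with
  | zero => simp
  | succ n ih => rw [Finset.sum_range_succ, ih]; push_cast; ring

lemma sumP2 (X : ℝ) : ∀ n : ℕ,
    ∑ k ∈ Finset.range n,
      (((k:ℝ)+1) * ( (-2/3)*(X-(k:ℝ)-1)*((k:ℝ)+1) + (2/3)*(X-(k:ℝ)-1)*(2*X-2*(k:ℝ)-2)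
        + (X-(k:ℝ)-1)*(2*X-2*(k:ℝ)-2)*((k:ℝ)+1) + (-2)*(X-(k:ℝ)-1)^2
        + (-2)*(X-(k:ℝ)-1)^2*((k:ℝ)+1) + 2*(X-(k:ℝ)-1)^2*(2*X-2*(k:ℝ)-2)
        + (X-(k:ℝ)-1)^2*(2*X-2*(k:ℝ)-2)*((k:ℝ)+1) + (-4)*(X-(k:ℝ)-1)^3
        + (-4/3)*(X-(k:ℝ)-1)^3*((k:ℝ)+1) + (4/3)*(X-(k:ℝ)-1)^3*(2*X-2*(k:ℝ)-2)
        + (-2)*(X-(k:ℝ)-1)^4 ))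
      = (2/15)*X*(n:ℝ) + (1/3)*X*(n:ℝ)^2 + (-1/3)*X*(n:ℝ)^4 + (-2/15)*X*(n:ℝ)^5
        + (-1/3)*X^2*(n:ℝ) + (1/6)*X^2*(n:ℝ)^2 + X^2*(n:ℝ)^3 + (1/2)*X^2*(n:ℝ)^4
        + (-1/3)*X^3*(n:ℝ) + (-1)*X^3*(n:ℝ)^2 + (-2/3)*X^3*(n:ℝ)^3 + (1/3)*X^4*(n:ℝ)
        + (1/3)*X^4*(n:ℝ)^2 := by
  intro n
  induction n with
  | zero => simp
  | succ n ih => rw [Finset.sum_range_succ, ih]; push_cast; ring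

set_option maxHeartbeats 3200000

/-- The value of `N_{3/2,1}` (recall `h = 2g`, so `h = 3`) at an even
positive boundary length `L₁`. -/
theorem N_threehalf_one (b : ℝ) (N : ℤ → List ℤ → ℝ)
    (hzero : ZeroConvention N) (hpar : ParitySupported N)
    (hinit : InitialConditions b N) (hrec : AsymRecursion b N) :
    ∀ L1 : ℤ, 0 < L1 → Even L1 →
      N 3 [L1] =
        b / 46080 * ((L1 : ℝ) ^ 2 - 4) * ((L1 : ℝ) - 4) *
          ((1 + b) * (17 * (L1 : ℝ) ^ 2 + 38 * (L1 : ℝ) - 60)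
            + 30 * b ^ 2 * ((L1 : ℝ) ^ 2 - (L1 : ℝ))) := by
  intro L1 hL1 hev
  obtain ⟨h03, h12, h11⟩ := hinit
  obtain ⟨m, hm1, hL⟩ : ∃ m : ℕ, 1 ≤ m ∧ L1 = ((2*m : ℕ) : ℤ) := by
    obtain ⟨t, ht⟩ := hev
    exact ⟨t.toNat, by omega, by omega⟩
  have hrecn := hrec 3 L1 [] hL1 (by simp) (by norm_num) (by simpa using hev)
  unfold AsymRecAt at hrecn
  simp only [List.length_nil, Finset.range_zero, Finset.sum_empty, Finset.powerset_empty,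
    Finset.sum_singleton, selectIdxs, removeIdxs, List.zipIdx_nil, List.filterMap_nil,
    zero_add, show (3:ℤ)-1 = 2 from rfl, show (3:ℤ)-2 = 1 from rfl] at hrecn
  rw [hL] at hrecn ⊢
  -- the genus-splitting sum over h1 vanishes
  have hzero4 : ∀ p q : ℤ, (∑ h1 ∈ Finset.Icc (0:ℤ) 3, N h1 [p] * N (3-h1) [q]) = 0 := by
    intro p q
    apply Finset.sum_eq_zero
    intro h1 hh1
    rw [Finset.mem_Icc] at hh1
    rcases le_or_gt h1 1 with hc | hc
    · rw [hzero h1 [p] (Or.inr (by simp only [List.length_cons, List.length_nil]; push_cast; omega)),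
        zero_mul]
    · rw [hzero (3-h1) [q] (Or.inr (by simp only [List.length_cons, List.length_nil]; push_cast; omega)),
        mul_zero]
  -- split the double sum into the (p-1)-part and the ramp(q-p)-part
  have hDsplit : (∑ p ∈ Finset.Icc (1:ℤ) ((2*m:ℕ):ℤ), ∑ q ∈ Finset.Icc (1:ℤ) ((2*m:ℕ):ℤ),
        (p:ℝ) * (q:ℝ) * kerD (((2*m:ℕ):ℤ):ℝ) (p:ℝ) (q:ℝ) *
          ((1+b)/2 * N 1 [p, q] + ∑ h1 ∈ Finset.Icc (0:ℤ) 3, N h1 [p] * N (3-h1) [q]))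
      = (∑ p ∈ Finset.Icc (1:ℤ) ((2*m:ℕ):ℤ), ∑ q ∈ Finset.Icc (1:ℤ) ((2*m:ℕ):ℤ),
          (p:ℝ) * (q:ℝ) * kerD (((2*m:ℕ):ℤ):ℝ) (p:ℝ) (q:ℝ) *
            ((1+b)/2 * ((1+(-1:ℝ)^(p+q))/2 * (b*((p:ℝ)-1)/4))))
        + (∑ p ∈ Finset.Icc (1:ℤ) ((2*m:ℕ):ℤ), ∑ q ∈ Finset.Icc (1:ℤ) ((2*m:ℕ):ℤ),
          (p:ℝ) * (q:ℝ) * kerD (((2*m:ℕ):ℤ):ℝ) (p:ℝ) (q:ℝ) *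
            ((1+b)/2 * ((1+(-1:ℝ)^(p+q))/2 * (b*(max ((q:ℝ)-(p:ℝ)) 0)/4)))) := by
    rw [← Finset.sum_add_distrib]
    refine Finset.sum_congr rfl fun p hp => ?_
    rw [← Finset.sum_add_distrib]
    refine Finset.sum_congr rfl fun q hq => ?_
    rw [Finset.mem_Icc] at hp hq
    rw [hzero4, h12 p q (by omega) (by omega), add_zero]
    rw [show ((max p q : ℤ):ℝ) = max (p:ℝ) (q:ℝ) from by push_cast; ring_nf]
    rw [max_split]
    ring
  -- evaluate the single sum (N_{1,1} contribution)
  have hS2 : ∑ x ∈ Finset.Icc (1:ℤ) ((2*m:ℕ):ℤ), (x:ℝ) * ((((2*m:ℕ):ℤ):ℝ) - 1)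
        * kerE (((2*m:ℕ):ℤ):ℝ) (x:ℝ) * N 2 [x]
      = (2*(m:ℝ)-1)/(384*(m:ℝ)) *
        ((16/5)*(m:ℝ) + 8*(m:ℝ)^2 + (-8)*(m:ℝ)^4 + (-16/5)*(m:ℝ)^5 + (-8)*(m:ℝ)*(m:ℝ)
        + (-4)*(m:ℝ)*(m:ℝ)^2 + 8*(m:ℝ)*(m:ℝ)^3 + 4*(m:ℝ)*(m:ℝ)^4 + (16/5)*b*(m:ℝ) + 8*b*(m:ℝ)^2
        + (-8)*b*(m:ℝ)^4 + (-16/5)*b*(m:ℝ)^5 + (-8)*b*(m:ℝ)*(m:ℝ) + (-4)*b*(m:ℝ)*(m:ℝ)^2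
        + 8*b*(m:ℝ)*(m:ℝ)^3 + 4*b*(m:ℝ)*(m:ℝ)^4 + 16*b^2*(m:ℝ)^2 + 16*b^2*(m:ℝ)^3
        + (-16)*b^2*(m:ℝ)^4 + (-16)*b^2*(m:ℝ)^5 + (-8)*b^2*(m:ℝ)*(m:ℝ) + (-20)*b^2*(m:ℝ)*(m:ℝ)^2
        + 8*b^2*(m:ℝ)*(m:ℝ)^3 + 20*b^2*(m:ℝ)*(m:ℝ)^4) := by
    rw [sum_Icc_one, sum_range_pair]
    trans (∑ a ∈ Finset.range m, (2*(m:ℝ)-1)/(384*(m:ℝ)) *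
        ((2*(a:ℝ)+2)*(2*(m:ℝ)-(2*(a:ℝ)+2))
          * ((1+b)*((2*(a:ℝ)+2)^2-4) + b^2*(5*(2*(a:ℝ)+2)^2-12*(2*(a:ℝ)+2)+4))))
    · refine Finset.sum_congr rfl fun a ha => ?_
      have ham : a < m := Finset.mem_range.mp ha
      try simp only []
      have hodd : N 2 [((2*a:ℕ):ℤ)+1] = 0 := by
        rw [h11 _ (by omega)]
        rw [show ((2*a:ℕ):ℤ)+1 = 2*(a:ℤ)+1 from by push_cast; ring, neg_one_zpow_odd]
        norm_num
      rw [hodd, mul_zero, zero_add]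
      rw [h11 _ (by omega)]
      rw [show ((2*a+1:ℕ):ℤ)+1 = 2*((a:ℤ)+1) from by push_cast; ring, neg_one_zpow_even]
      simp only [kerE, ramp]
      rw [max_eq_left (by
        have h1 : (2*((a:ℤ)+1) : ℤ) ≤ ((2*m:ℕ):ℤ) := by omega
        have h2 : ((2*((a:ℤ)+1) : ℤ) : ℝ) ≤ (((2*m:ℕ):ℤ) : ℝ) := by exact_mod_cast h1
        linarith)]
      push_cast
      ring
    · rw [← Finset.mul_sum, sumPB b (m:ℝ) m]
  -- evaluate the (p-1)-part of the double sum
  have hD1 : (∑ p ∈ Finset.Icc (1:ℤ) ((2*m:ℕ):ℤ), ∑ q ∈ Finset.Icc (1:ℤ) ((2*m:ℕ):ℤ),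
          (p:ℝ) * (q:ℝ) * kerD (((2*m:ℕ):ℤ):ℝ) (p:ℝ) (q:ℝ) *
            ((1+b)/2 * ((1+(-1:ℝ)^(p+q))/2 * (b*((p:ℝ)-1)/4))))
      = (1+b)*b/(16*(m:ℝ)) *
        ((-1/5)*(m:ℝ) + (-1/18)*(m:ℝ)^2 + (m:ℝ)^3 + (17/18)*(m:ℝ)^4 + (-4/5)*(m:ℝ)^5
        + (-8/9)*(m:ℝ)^6 + (11/45)*(m:ℝ)*(m:ℝ) + (-1)*(m:ℝ)*(m:ℝ)^2 + (-16/9)*(m:ℝ)*(m:ℝ)^3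
        + 2*(m:ℝ)*(m:ℝ)^4 + (16/5)*(m:ℝ)*(m:ℝ)^5 + (1/3)*(m:ℝ)^2*(m:ℝ) + (m:ℝ)^2*(m:ℝ)^2
        + (-4/3)*(m:ℝ)^2*(m:ℝ)^3 + (-4)*(m:ℝ)^2*(m:ℝ)^4 + (-4/9)*(m:ℝ)^3*(m:ℝ) + (16/9)*(m:ℝ)^3*(m:ℝ)^3) := by
    rw [sum_Icc_one, sum_range_pair]
    trans (∑ a ∈ Finset.range m, (1+b)*b/(16*(m:ℝ)) *
      ( (2*(a:ℝ)+1)*(2*(a:ℝ))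
          * ((1/3)*((m:ℝ)-(a:ℝ)) + ((m:ℝ)-(a:ℝ))^2*(2*(m:ℝ)-2*(a:ℝ)-1) + (-4/3)*((m:ℝ)-(a:ℝ))^3)
        + (2*(a:ℝ)+2)*(2*(a:ℝ)+1)
          * ((-2/3)*((m:ℝ)-(a:ℝ)-1) + ((m:ℝ)-(a:ℝ)-1)*(2*(m:ℝ)-2*(a:ℝ)-2) + (-2)*((m:ℝ)-(a:ℝ)-1)^2
              + ((m:ℝ)-(a:ℝ)-1)^2*(2*(m:ℝ)-2*(a:ℝ)-2) + (-4/3)*((m:ℝ)-(a:ℝ)-1)^3) ))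
    · refine Finset.sum_congr rfl fun a ha => ?_
      have ham : a < m := Finset.mem_range.mp ha
      try simp only []
      have hcast1 : ((m-a-1:ℕ):ℝ) = (m:ℝ)-(a:ℝ)-1 := by
        have : ((m-a-1:ℕ):ℤ) = (m:ℤ)-(a:ℤ)-1 := by omega
        exact_mod_cast this
      -- inner sum for p = 2a+1 (odd)
      have hOdd : (∑ q ∈ Finset.Icc (1:ℤ) ((2*m:ℕ):ℤ),
            ((((2*a:ℕ):ℤ)+1 : ℤ):ℝ) * (q:ℝ)
              * kerD (((2*m:ℕ):ℤ):ℝ) ((((2*a:ℕ):ℤ)+1 : ℤ):ℝ) (q:ℝ) *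
              ((1+b)/2 * ((1+(-1:ℝ)^((((2*a:ℕ):ℤ)+1)+q))/2
                * (b*(((((2*a:ℕ):ℤ)+1 : ℤ):ℝ)-1)/4))))
          = ((1+b)*b/(16*(m:ℝ))*((2*(a:ℝ)+1)*(2*(a:ℝ)))) *
              ((1/3)*((m:ℝ)-(a:ℝ)-1) + ((m:ℝ)-(a:ℝ)-1)^2*(2*(m:ℝ)-2*(a:ℝ)-1) + (-4/3)*((m:ℝ)-(a:ℝ)-1)^3) := by
        trans (∑ q ∈ Finset.Icc (1:ℤ) (((2*m:ℕ):ℤ) - (((2*a:ℕ):ℤ)+1)),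
            ((((2*a:ℕ):ℤ)+1 : ℤ):ℝ) * (q:ℝ)
              * kerD (((2*m:ℕ):ℤ):ℝ) ((((2*a:ℕ):ℤ)+1 : ℤ):ℝ) (q:ℝ) *
              ((1+b)/2 * ((1+(-1:ℝ)^((((2*a:ℕ):ℤ)+1)+q))/2
                * (b*(((((2*a:ℕ):ℤ)+1 : ℤ):ℝ)-1)/4))))
        · symm
          apply Finset.sum_subset
          · apply Finset.Icc_subset_Icc_right; omega
          · intro q hq hq2
            simp only [Finset.mem_Icc] at hq hq2
            have h0 : (((2*m:ℕ):ℤ):ℝ) - ((((2*a:ℕ):ℤ)+1 : ℤ):ℝ) - (q:ℝ) ≤ 0 := by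
              have hx : ((2*m:ℕ):ℤ) - (((2*a:ℕ):ℤ)+1) - q ≤ 0 := by omega
              exact_mod_cast hx
            simp only [kerD, ramp]
            rw [max_eq_right h0]
            ring
        · rw [show ((2*m:ℕ):ℤ) - (((2*a:ℕ):ℤ)+1) = ((2*(m-a-1)+1:ℕ):ℤ) from by omega]
          rw [sum_Icc_one, sum_range_pair']
          trans ((∑ i ∈ Finset.range (m-a-1),
              ((1+b)*b/(16*(m:ℝ))*((2*(a:ℝ)+1)*(2*(a:ℝ))))
                * ((2*(i:ℝ)+1)*((2*(m:ℝ)-2*(a:ℝ)-1)-(2*(i:ℝ)+1)))) + 0)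
          · congr 1
            · refine Finset.sum_congr rfl fun i hi => ?_
              have him : i < m-a-1 := Finset.mem_range.mp hi
              try simp only []
              rw [show ((((2*a:ℕ):ℤ)+1)+(((2*i:ℕ):ℤ)+1)) = 2*((a:ℤ)+(i:ℤ)+1)
                  from by push_cast; ring, neg_one_zpow_even]
              rw [show ((((2*a:ℕ):ℤ)+1)+(((2*i+1:ℕ):ℤ)+1)) = 2*((a:ℤ)+(i:ℤ)+1)+1
                  from by push_cast; ring, neg_one_zpow_odd]
              simp only [kerD, ramp]
              rw [max_eq_left (show (0:ℝ) ≤ (((2*m:ℕ):ℤ):ℝ) - (((((2*a:ℕ):ℤ)+1):ℤ):ℝ)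
                  - (((((2*i:ℕ):ℤ)+1):ℤ):ℝ) from by
                have hx : (0:ℤ) ≤ ((2*m:ℕ):ℤ) - (((2*a:ℕ):ℤ)+1) - (((2*i:ℕ):ℤ)+1) := by omega
                exact_mod_cast hx)]
              push_cast
              ring
            · -- the q = L - p term vanishes (ramp argument is 0)
              simp only [kerD, ramp]
              rw [max_eq_right (show (((2*m:ℕ):ℤ):ℝ) - (((((2*a:ℕ):ℤ)+1):ℤ):ℝ)
                  - (((((2*(m-a-1):ℕ):ℤ)+1):ℤ):ℝ) ≤ (0:ℝ) from by
                have hx : ((2*m:ℕ):ℤ) - (((2*a:ℕ):ℤ)+1) - (((2*(m-a-1):ℕ):ℤ)+1) ≤ 0 := by omega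
                exact_mod_cast hx)]
              ring
          · rw [add_zero, ← Finset.mul_sum, sumPO (2*(m:ℝ)-2*(a:ℝ)-1) (m-a-1), hcast1]
      -- inner sum for p = 2a+2 (even)
      have hEven : (∑ q ∈ Finset.Icc (1:ℤ) ((2*m:ℕ):ℤ),
            ((((2*a+1:ℕ):ℤ)+1 : ℤ):ℝ) * (q:ℝ)
              * kerD (((2*m:ℕ):ℤ):ℝ) ((((2*a+1:ℕ):ℤ)+1 : ℤ):ℝ) (q:ℝ) *
              ((1+b)/2 * ((1+(-1:ℝ)^((((2*a+1:ℕ):ℤ)+1)+q))/2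
                * (b*(((((2*a+1:ℕ):ℤ)+1 : ℤ):ℝ)-1)/4))))
          = ((1+b)*b/(16*(m:ℝ))*((2*(a:ℝ)+2)*(2*(a:ℝ)+1))) *
              ((-2/3)*((m:ℝ)-(a:ℝ)-1) + ((m:ℝ)-(a:ℝ)-1)*(2*(m:ℝ)-2*(a:ℝ)-2) + (-2)*((m:ℝ)-(a:ℝ)-1)^2 + ((m:ℝ)-(a:ℝ)-1)^2*(2*(m:ℝ)-2*(a:ℝ)-2) + (-4/3)*((m:ℝ)-(a:ℝ)-1)^3) := by
        trans (∑ q ∈ Finset.Icc (1:ℤ) (((2*m:ℕ):ℤ) - (((2*a+1:ℕ):ℤ)+1)),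
            ((((2*a+1:ℕ):ℤ)+1 : ℤ):ℝ) * (q:ℝ)
              * kerD (((2*m:ℕ):ℤ):ℝ) ((((2*a+1:ℕ):ℤ)+1 : ℤ):ℝ) (q:ℝ) *
              ((1+b)/2 * ((1+(-1:ℝ)^((((2*a+1:ℕ):ℤ)+1)+q))/2
                * (b*(((((2*a+1:ℕ):ℤ)+1 : ℤ):ℝ)-1)/4))))
        · symm
          apply Finset.sum_subset
          · apply Finset.Icc_subset_Icc_right; omega
          · intro q hq hq2
            simp only [Finset.mem_Icc] at hq hq2
            have h0 : (((2*m:ℕ):ℤ):ℝ) - ((((2*a+1:ℕ):ℤ)+1 : ℤ):ℝ) - (q:ℝ) ≤ 0 := by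
              have hx : ((2*m:ℕ):ℤ) - (((2*a+1:ℕ):ℤ)+1) - q ≤ 0 := by omega
              exact_mod_cast hx
            simp only [kerD, ramp]
            rw [max_eq_right h0]
            ring
        · rw [show ((2*m:ℕ):ℤ) - (((2*a+1:ℕ):ℤ)+1) = ((2*(m-a-1):ℕ):ℤ) from by omega]
          rw [sum_Icc_one, sum_range_pair]
          trans (∑ i ∈ Finset.range (m-a-1),
              ((1+b)*b/(16*(m:ℝ))*((2*(a:ℝ)+2)*(2*(a:ℝ)+1)))
                * ((2*(i:ℝ)+2)*((2*(m:ℝ)-2*(a:ℝ)-2)-(2*(i:ℝ)+2))))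
          · refine Finset.sum_congr rfl fun i hi => ?_
            have him : i < m-a-1 := Finset.mem_range.mp hi
            try simp only []
            rw [show ((((2*a+1:ℕ):ℤ)+1)+(((2*i:ℕ):ℤ)+1)) = 2*((a:ℤ)+(i:ℤ)+1)+1
                from by push_cast; ring, neg_one_zpow_odd]
            rw [show ((((2*a+1:ℕ):ℤ)+1)+(((2*i+1:ℕ):ℤ)+1)) = 2*((a:ℤ)+(i:ℤ)+2)
                from by push_cast; ring, neg_one_zpow_even]
            simp only [kerD, ramp]
            rw [max_eq_left (show (0:ℝ) ≤ (((2*m:ℕ):ℤ):ℝ) - (((((2*a+1:ℕ):ℤ)+1):ℤ):ℝ)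
                - (((((2*i+1:ℕ):ℤ)+1):ℤ):ℝ) from by
              have hx : (0:ℤ) ≤ ((2*m:ℕ):ℤ) - (((2*a+1:ℕ):ℤ)+1) - (((2*i+1:ℕ):ℤ)+1) := by omega
              exact_mod_cast hx)]
            push_cast
            ring
          · rw [← Finset.mul_sum, sumPA (2*(m:ℝ)-2*(a:ℝ)-2) (m-a-1), hcast1]
      rw [hOdd, hEven]
      ring
    · rw [← Finset.mul_sum, sumCD1 (m:ℝ) m]
  -- evaluate the ramp(q-p)-part of the double sum
  have hD2 : (∑ p ∈ Finset.Icc (1:ℤ) ((2*m:ℕ):ℤ), ∑ q ∈ Finset.Icc (1:ℤ) ((2*m:ℕ):ℤ),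
          (p:ℝ) * (q:ℝ) * kerD (((2*m:ℕ):ℤ):ℝ) (p:ℝ) (q:ℝ) *
            ((1+b)/2 * ((1+(-1:ℝ)^(p+q))/2 * (b*(max ((q:ℝ)-(p:ℝ)) 0)/4))))
      = (1+b)*b/(16*(m:ℝ)) *
        ((2/15)*(m:ℝ)*((m:ℝ)-1) + (1/3)*(m:ℝ)*((m:ℝ)-1)^2 + (-1/3)*(m:ℝ)*((m:ℝ)-1)^4 + (-2/15)*(m:ℝ)*((m:ℝ)-1)^5
        + (-1/3)*(m:ℝ)^2*((m:ℝ)-1) + (1/6)*(m:ℝ)^2*((m:ℝ)-1)^2 + (m:ℝ)^2*((m:ℝ)-1)^3 + (1/2)*(m:ℝ)^2*((m:ℝ)-1)^4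
        + (-1/3)*(m:ℝ)^3*((m:ℝ)-1) + (-1)*(m:ℝ)^3*((m:ℝ)-1)^2 + (-2/3)*(m:ℝ)^3*((m:ℝ)-1)^3 + (1/3)*(m:ℝ)^4*((m:ℝ)-1)
        + (1/3)*(m:ℝ)^4*((m:ℝ)-1)^2) := by
    rw [sum_Icc_one]
    trans (∑ k ∈ Finset.range (m-1), (1+b)*b/(16*(m:ℝ)) *
      (((k:ℝ)+1) * ( (-2/3)*((m:ℝ)-(k:ℝ)-1)*((k:ℝ)+1) + (2/3)*((m:ℝ)-(k:ℝ)-1)*(2*(m:ℝ)-2*(k:ℝ)-2)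
        + ((m:ℝ)-(k:ℝ)-1)*(2*(m:ℝ)-2*(k:ℝ)-2)*((k:ℝ)+1) + (-2)*((m:ℝ)-(k:ℝ)-1)^2
        + (-2)*((m:ℝ)-(k:ℝ)-1)^2*((k:ℝ)+1) + 2*((m:ℝ)-(k:ℝ)-1)^2*(2*(m:ℝ)-2*(k:ℝ)-2)
        + ((m:ℝ)-(k:ℝ)-1)^2*(2*(m:ℝ)-2*(k:ℝ)-2)*((k:ℝ)+1) + (-4)*((m:ℝ)-(k:ℝ)-1)^3
        + (-4/3)*((m:ℝ)-(k:ℝ)-1)^3*((k:ℝ)+1) + (4/3)*((m:ℝ)-(k:ℝ)-1)^3*(2*(m:ℝ)-2*(k:ℝ)-2)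
        + (-2)*((m:ℝ)-(k:ℝ)-1)^4 )))
    · refine ((Finset.sum_subset (Finset.range_subset_range.mpr (by omega : m-1 ≤ 2*m)) ?_).symm).trans
        (Finset.sum_congr rfl fun k hk => ?_)
      · -- terms with p ≥ m vanish
        intro k _ hk2
        have hkm : m-1 ≤ k := by
          by_contra hc
          exact hk2 (Finset.mem_range.mpr (by omega))
        try simp only []
        apply Finset.sum_eq_zero
        intro q hq
        rw [Finset.mem_Icc] at hq
        rcases le_or_gt q ((k:ℤ)+1) with hc | hc
        · rw [max_eq_right (show (q:ℝ) - ((((k:ℤ)+1):ℤ):ℝ) ≤ (0:ℝ) from by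
            have hx : (q - ((k:ℤ)+1) : ℤ) ≤ 0 := by omega
            exact_mod_cast hx)]
          ring
        · simp only [kerD, ramp]
          rw [max_eq_right (show (((2*m:ℕ):ℤ):ℝ) - ((((k:ℤ)+1):ℤ):ℝ) - (q:ℝ) ≤ (0:ℝ) from by
            have hx : ((2*m:ℕ):ℤ) - ((k:ℤ)+1) - q ≤ 0 := by omega
            exact_mod_cast hx)]
          ring
      · -- terms with p = k+1 ≤ m-1
        have hkm : k < m-1 := Finset.mem_range.mp hk
        try simp only []
        have hcast2 : ((m-k-1:ℕ):ℝ) = (m:ℝ)-(k:ℝ)-1 := by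
          have : ((m-k-1:ℕ):ℤ) = (m:ℤ)-(k:ℤ)-1 := by omega
          exact_mod_cast this
        trans (∑ q ∈ Finset.Icc ((k:ℤ)+1+1) ((k:ℤ)+1+((2*(m-k-1):ℕ):ℤ)),
            (((k:ℤ)+1 : ℤ):ℝ) * (q:ℝ) * kerD (((2*m:ℕ):ℤ):ℝ) (((k:ℤ)+1 : ℤ):ℝ) (q:ℝ) *
              ((1+b)/2 * ((1+(-1:ℝ)^(((k:ℤ)+1)+q))/2
                * (b*(max ((q:ℝ)-((((k:ℤ)+1) : ℤ):ℝ)) 0)/4))))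
        · symm
          apply Finset.sum_subset
          · intro q hq
            simp only [Finset.mem_Icc] at hq ⊢
            omega
          · intro q hq hq2
            simp only [Finset.mem_Icc] at hq hq2
            rcases le_or_gt q ((k:ℤ)+1) with hc | hc
            · rw [max_eq_right (show (q:ℝ) - ((((k:ℤ)+1):ℤ):ℝ) ≤ (0:ℝ) from by
                have hx : (q - ((k:ℤ)+1) : ℤ) ≤ 0 := by omega
                exact_mod_cast hx)]
              ring
            · simp only [kerD, ramp]
              rw [max_eq_right (show (((2*m:ℕ):ℤ):ℝ) - ((((k:ℤ)+1):ℤ):ℝ) - (q:ℝ) ≤ (0:ℝ) from by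
                have hx : ((2*m:ℕ):ℤ) - ((k:ℤ)+1) - q ≤ 0 := by omega
                exact_mod_cast hx)]
              ring
        · rw [sum_Icc_shift, sum_range_pair]
          trans (∑ i ∈ Finset.range (m-k-1),
              ((1+b)*b/(16*(m:ℝ))*((k:ℝ)+1))
                * (((((k:ℝ)+1))+(2*(i:ℝ)+2))*((2*(m:ℝ)-2*(k:ℝ)-2)-(2*(i:ℝ)+2))*(2*(i:ℝ)+2)))
          · refine Finset.sum_congr rfl fun i hi => ?_
            have him : i < m-k-1 := Finset.mem_range.mp hi
            try simp only []
            rw [show (((k:ℤ)+1)+((k:ℤ)+1+1+((2*i:ℕ):ℤ))) = 2*((k:ℤ)+(i:ℤ)+1)+1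
                from by push_cast; ring, neg_one_zpow_odd]
            rw [show (((k:ℤ)+1)+((k:ℤ)+1+1+((2*i+1:ℕ):ℤ))) = 2*((k:ℤ)+(i:ℤ)+2)
                from by push_cast; ring, neg_one_zpow_even]
            simp only [kerD, ramp]
            rw [max_eq_left (show (0:ℝ) ≤ (((2*m:ℕ):ℤ):ℝ) - ((((k:ℤ)+1):ℤ):ℝ)
                - ((((k:ℤ)+1+1+((2*i+1:ℕ):ℤ)):ℤ):ℝ) from by
              have hx : (0:ℤ) ≤ ((2*m:ℕ):ℤ) - ((k:ℤ)+1) - ((k:ℤ)+1+1+((2*i+1:ℕ):ℤ)) := by omega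
              exact_mod_cast hx)]
            rw [max_eq_left (show (0:ℝ) ≤ ((((k:ℤ)+1+1+((2*i+1:ℕ):ℤ)):ℤ):ℝ) - ((((k:ℤ)+1):ℤ):ℝ)
                from by
              have hx : (0:ℤ) ≤ ((k:ℤ)+1+1+((2*i+1:ℕ):ℤ)) - ((k:ℤ)+1) := by omega
              exact_mod_cast hx)]
            push_cast
            ring
          · rw [← Finset.mul_sum, sumPC (2*(m:ℝ)-2*(k:ℝ)-2) ((k:ℝ)+1) (m-k-1), hcast2]
            ring
    · rw [← Finset.mul_sum, sumP2 (m:ℝ) (m-1)]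
      rw [show ((m-1:ℕ):ℝ) = (m:ℝ)-1 from by
        have : ((m-1:ℕ):ℤ) = (m:ℤ)-1 := by omega
        exact_mod_cast this]
  rw [hrecn, hDsplit, hS2, hD1, hD2]
  have hm0 : ((m:ℝ)) ≠ 0 := Nat.cast_ne_zero.mpr (by omega)
  push_cast
  field_simp
  ring

end
end

section
/- Let N be a parity-supported refined lattice family with values in the polynomial ring ℝ[b] (with b now an indeterminate, the initial conditions read as polynomial identities in b), satisfying the initial conditions and the asymmetric recursion at every (g,n,L) with 2g−2+n > 1 and L₁+⋯+L_n even. Then for every stable pair (g,n) and every L ∈ (ℤ_{>0})^n, the polynomial N_{g,n}(L) ∈ ℝ[b] has degree at most 2g in b. -/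
open scoped BigOperators

noncomputable section

open Polynomial

/-- Zero convention for a refined lattice family with values in `ℝ[b]`. -/
def PZeroConvention (N : ℤ → List ℤ → Polynomial ℝ) : Prop :=
  ∀ (h : ℤ) (L : List ℤ), h < 0 ∨ h + (L.length : ℤ) ≤ 2 → N h L = 0

/-- Parity support for a refined lattice family with values in `ℝ[b]`. -/
def PParitySupported (N : ℤ → List ℤ → Polynomial ℝ) : Prop :=
  ∀ (h : ℤ) (L : List ℤ), (∀ x ∈ L, 0 < x) → ¬ Even L.sum → N h L = 0

/-- The initial conditions, read as polynomial identities in the indeterminate `b = X`. -/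
def PInitialConditions (N : ℤ → List ℤ → Polynomial ℝ) : Prop :=
  (∀ L1 L2 L3 : ℤ, 0 < L1 → 0 < L2 → 0 < L3 →
    N 0 [L1, L2, L3] = C ((1 + (-1 : ℝ) ^ (L1 + L2 + L3)) / 2 * (1 / 2))) ∧
  (∀ L1 L2 : ℤ, 0 < L1 → 0 < L2 →
    N 1 [L1, L2] = C ((1 + (-1 : ℝ) ^ (L1 + L2)) / 2) *
      (X * C ((((max L1 L2 : ℤ) : ℝ) - 1) / 4))) ∧
  (∀ L1 : ℤ, 0 < L1 →
    N 2 [L1] = C ((1 + (-1 : ℝ) ^ L1) / 2) *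
      (((1 + X) * C ((L1 : ℝ) ^ 2 - 4) +
        X ^ 2 * C (5 * (L1 : ℝ) ^ 2 - 12 * (L1 : ℝ) + 4)) * C (1 / 96)))

/-- The asymmetric recursion at `(g, n, L)`, with values in `ℝ[b]` and `b = X`. -/
def PAsymRecAt (N : ℤ → List ℤ → Polynomial ℝ) (h : ℤ) (L1 : ℤ) (T : List ℤ) : Prop :=
  N h (L1 :: T) =
    (∑ m ∈ Finset.range T.length, ∑ p ∈ Finset.Icc 1 (L1 + T.getD m 0),
        C ((p : ℝ) * kerR (L1 : ℝ) ((T.getD m 0 : ℤ) : ℝ) (p : ℝ)) * N h (p :: T.eraseIdx m))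
    + X * (∑ p ∈ Finset.Icc 1 L1,
        C ((p : ℝ) * ((L1 : ℝ) - 1) * kerE (L1 : ℝ) (p : ℝ)) * N (h - 1) (p :: T))
    + ∑ p ∈ Finset.Icc 1 L1, ∑ q ∈ Finset.Icc 1 L1,
        C ((p : ℝ) * (q : ℝ) * kerD (L1 : ℝ) (p : ℝ) (q : ℝ)) *
          (C (1 / 2) * (1 + X) * N (h - 2) (p :: q :: T)
            + ∑ h1 ∈ Finset.Icc 0 h, ∑ S ∈ (Finset.range T.length).powerset,
                N h1 (p :: selectIdxs T S) * N (h - h1) (q :: removeIdxs T S))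

/-- The family satisfies the asymmetric recursion at every `(g, n, L)` with
`2g - 2 + n > 1`, `L ∈ (ℤ_{>0})ⁿ` and `L₁ + ⋯ + L_n` even. -/
def PAsymRecursion (N : ℤ → List ℤ → Polynomial ℝ) : Prop :=
  ∀ (h : ℤ) (L1 : ℤ) (T : List ℤ), 0 < L1 → (∀ x ∈ T, 0 < x) →
    3 < h + (1 + (T.length : ℤ)) → Even (L1 + T.sum) → PAsymRecAt N h L1 T

lemma selectIdxs_length_add' {α : Type*} (L : List α) (S : Finset ℕ) :
    (selectIdxs L S).length + (removeIdxs L S).length = L.length := by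
  unfold selectIdxs removeIdxs
  rw [← List.length_zipIdx (l := L) (i := 0)]
  generalize L.zipIdx = l
  induction l with
  | nil => simp
  | cons a l ih =>
    by_cases ha : a.2 ∈ S <;> simp [List.filterMap_cons, ha] <;> omega

lemma mem_selectIdxs' {α : Type*} {x : α} {L : List α} {S : Finset ℕ}
    (hx : x ∈ selectIdxs L S) : x ∈ L := by
  unfold selectIdxs at hx
  rw [List.mem_filterMap] at hx
  obtain ⟨p, hp, hpx⟩ := hx
  split at hpx
  · cases hpx; exact List.fst_mem_of_mem_zipIdx hp
  · cases hpx

lemma mem_removeIdxs' {α : Type*} {x : α} {L : List α} {S : Finset ℕ}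
    (hx : x ∈ removeIdxs L S) : x ∈ L := by
  unfold removeIdxs at hx
  rw [List.mem_filterMap] at hx
  obtain ⟨p, hp, hpx⟩ := hx
  split at hpx
  · cases hpx
  · cases hpx; exact List.fst_mem_of_mem_zipIdx hp

/-- For a parity-supported refined lattice family with values in
`ℝ[b]` satisfying the initial conditions and the asymmetric recursion, the polynomial
`N_{g,n}(L)` has degree at most `2g` in `b`, for every stable `(g,n)` and positive `L`. -/
theorem N_degree_le (N : ℤ → List ℤ → Polynomial ℝ)
    (hzero : PZeroConvention N) (hpar : PParitySupported N)
    (hinit : PInitialConditions N) (hrec : PAsymRecursion N) :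
    ∀ (h : ℤ) (L : List ℤ), 0 ≤ h → (∀ x ∈ L, 0 < x) → 0 < L.length →
      2 < h + (L.length : ℤ) → (N h L).natDegree ≤ h.toNat := by
  suffices H : ∀ k : ℕ, ∀ h : ℤ, ∀ L : List ℤ, h.toNat + L.length ≤ k →
      (∀ x ∈ L, 0 < x) → 0 < L.length → (N h L).natDegree ≤ h.toNat by
    intro h L h0 hpos hlen _
    exact H (h.toNat + L.length) h L le_rfl hpos hlen
  intro k
  induction k with
  | zero =>
    intro h L hk hpos hlen
    omega
  | succ k ih =>
    intro h L hk hpos hlen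
    by_cases hneg : h < 0
    · rw [hzero h L (Or.inl hneg)]; simp
    push_neg at hneg
    by_cases hsmall : h + (L.length : ℤ) ≤ 2
    · rw [hzero h L (Or.inr hsmall)]; simp
    push_neg at hsmall
    by_cases heven : Even L.sum
    swap
    · rw [hpar h L hpos heven]; simp
    by_cases hbase : h + (L.length : ℤ) = 3
    · -- base cases
      have hle2 : h ≤ 2 := by omega
      interval_cases h
      · -- h = 0, length = 3
        have hl3 : L.length = 3 := by omega
        obtain ⟨a, b, c, rfl⟩ := List.length_eq_three.mp hl3
        rw [hinit.1 a b c (hpos a (by simp)) (hpos b (by simp)) (hpos c (by simp)), natDegree_C]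
        exact Nat.zero_le _
      · -- h = 1, length = 2
        have hl2 : L.length = 2 := by omega
        obtain ⟨a, b, rfl⟩ := List.length_eq_two.mp hl2
        rw [hinit.2.1 a b (hpos a (by simp)) (hpos b (by simp))]
        show _ ≤ 1
        compute_degree
      · -- h = 2, length = 1
        have hl1 : L.length = 1 := by omega
        obtain ⟨a, rfl⟩ := List.length_eq_one_iff.mp hl1
        rw [hinit.2.2 a (hpos a (by simp))]
        show _ ≤ 2
        compute_degree
    · -- recursive case
      obtain ⟨L1, T, rfl⟩ := List.exists_cons_of_ne_nil (List.length_pos_iff.mp hlen)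
      have hL1 : 0 < L1 := hpos L1 (by simp)
      have hT : ∀ x ∈ T, 0 < x := fun x hx => hpos x (by simp [hx])
      simp only [List.length_cons] at hk hsmall hbase
      have hkk : h.toNat + T.length + 1 ≤ k + 1 := by omega
      have hev : Even (L1 + T.sum) := by simpa using heven
      have hr := hrec h L1 T hL1 hT (by omega) hev
      unfold PAsymRecAt at hr
      rw [hr]
      refine le_trans (natDegree_add_le _ _) (max_le (le_trans (natDegree_add_le _ _)
        (max_le ?_ ?_)) ?_)
      · -- term A
        refine natDegree_sum_le_of_forall_le _ _ fun m hm => ?_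
        refine natDegree_sum_le_of_forall_le _ _ fun p hp => ?_
        refine le_trans (natDegree_mul_le) ?_
        rw [natDegree_C, zero_add]
        have hm' : m < T.length := Finset.mem_range.mp hm
        have hlen' : (T.eraseIdx m).length = T.length - 1 := by
          rw [List.length_eraseIdx]; simp [hm']
        refine ih h (↑p :: T.eraseIdx m) (by simp [hlen']; omega) ?_ (by simp)
        intro x hx
        rcases List.mem_cons.mp hx with rfl | hx
        · exact_mod_cast (Finset.mem_Icc.mp hp).1
        · exact hT x (List.eraseIdx_subset hx)
      · -- term B
        by_cases h1 : 1 ≤ h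
        · refine le_trans (natDegree_mul_le) ?_
          have hX : (X : Polynomial ℝ).natDegree = 1 := natDegree_X
          rw [hX]
          have : (∑ p ∈ Finset.Icc 1 L1, C ((p : ℝ) * ((L1 : ℝ) - 1) * kerE (L1 : ℝ) (p : ℝ)) *
              N (h - 1) (↑p :: T)).natDegree ≤ (h - 1).toNat := by
            refine natDegree_sum_le_of_forall_le _ _ fun p hp => ?_
            refine le_trans (natDegree_mul_le) ?_
            rw [natDegree_C, zero_add]
            refine ih (h - 1) (↑p :: T) (by simp; omega) ?_ (by simp)
            intro x hx
            rcases List.mem_cons.mp hx with rfl | hx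
            · exact_mod_cast (Finset.mem_Icc.mp hp).1
            · exact hT x hx
          omega
        · have hh0 : h = 0 := by omega
          subst hh0
          rw [Finset.sum_eq_zero, mul_zero]
          · simp
          · intro p _
            rw [hzero (0 - 1) (↑p :: T) (Or.inl (by norm_num)), mul_zero]
      · -- term C
        refine natDegree_sum_le_of_forall_le _ _ fun p hp => ?_
        refine natDegree_sum_le_of_forall_le _ _ fun q hq => ?_
        refine le_trans (natDegree_mul_le) ?_
        rw [natDegree_C, zero_add]
        have hp1 : (0:ℤ) < p := (Finset.mem_Icc.mp hp).1
        have hq1 : (0:ℤ) < q := (Finset.mem_Icc.mp hq).1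
        refine le_trans (natDegree_add_le _ _) (max_le ?_ ?_)
        · -- (1+X) * N (h-2)
          by_cases h2 : 2 ≤ h
          · refine le_trans (natDegree_mul_le) ?_
            have h1X : ((C (1/2 : ℝ)) * (1 + X)).natDegree ≤ 1 := by compute_degree
            have hN : (N (h - 2) (↑p :: ↑q :: T)).natDegree ≤ (h - 2).toNat := by
              refine ih (h - 2) (↑p :: ↑q :: T) (by simp; omega) ?_ (by simp)
              intro x hx
              rcases List.mem_cons.mp hx with rfl | hx
              · exact_mod_cast hp1
              rcases List.mem_cons.mp hx with rfl | hx
              · exact_mod_cast hq1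
              · exact hT x hx
            omega
          · rw [hzero (h - 2) (↑p :: ↑q :: T) (Or.inl (by omega)), mul_zero]
            simp
        · -- products
          refine natDegree_sum_le_of_forall_le _ _ fun h1 hh1 => ?_
          refine natDegree_sum_le_of_forall_le _ _ fun S hS => ?_
          obtain ⟨hh1a, hh1b⟩ := Finset.mem_Icc.mp hh1
          have hlensum := selectIdxs_length_add' T S
          by_cases hm1 : h1.toNat + (1 + (selectIdxs T S).length) ≤ k ∧
              (h - h1).toNat + (1 + (removeIdxs T S).length) ≤ k
          · refine le_trans (natDegree_mul_le) ?_
            have d1 : (N h1 (↑p :: selectIdxs T S)).natDegree ≤ h1.toNat := by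
              refine ih h1 (↑p :: selectIdxs T S) (by simp; omega) ?_ (by simp)
              intro x hx
              rcases List.mem_cons.mp hx with rfl | hx
              · exact_mod_cast hp1
              · exact hT x (mem_selectIdxs' hx)
            have d2 : (N (h - h1) (↑q :: removeIdxs T S)).natDegree ≤ (h - h1).toNat := by
              refine ih (h - h1) (↑q :: removeIdxs T S) (by simp; omega) ?_ (by simp)
              intro x hx
              rcases List.mem_cons.mp hx with rfl | hx
              · exact_mod_cast hq1
              · exact hT x (mem_removeIdxs' hx)
            omega
          · rcases not_and_or.mp hm1 with hm | hm
            · -- first factor too big: second factor is N of h-h1=0 on singleton, zero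
              have hz2 : removeIdxs T S = [] := List.length_eq_zero_iff.mp (by omega)
              rw [hz2, hzero (h - h1) [(q:ℤ)] (Or.inr (by simp; omega)), mul_zero]
              simp
            · have hz1 : selectIdxs T S = [] := List.length_eq_zero_iff.mp (by omega)
              rw [hz1, hzero h1 [(p:ℤ)] (Or.inr (by simp; omega)), zero_mul]
              simp


end
end

section
/- Let n ≥ 1 and let S be a subset of {e_i + e_j : 1 ≤ i, j ≤ n} ⊆ ℚ^n (including the vectors 2e_i = e_i + e_i). If the ℚ-linear span of S has dimension n−1, then there exists a nonzero vector u ∈ ℤ^n with every entry in {−1, 0, +1} such that the standard inner product ⟨u, v⟩ equals 0 for every v ∈ S. -/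
open scoped BigOperators

/-- Let `S` be a set of vectors of the form `eᵢ + eⱼ` in `ℚⁿ`
(including the vectors `2eᵢ = eᵢ + eᵢ`). If the `ℚ`-span of `S` has dimension `n - 1`,
then there is a nonzero integer vector `u` with entries in `{-1, 0, 1}` orthogonal to
every element of `S`. -/
theorem exists_sign_vector_orthogonal (n : ℕ) (hn : 1 ≤ n) (S : Set (Fin n → ℚ))
    (hS : S ⊆ {v : Fin n → ℚ | ∃ i j : Fin n, v = Pi.single i 1 + Pi.single j 1})
    (hdim : Module.finrank ℚ (Submodule.span ℚ S) = n - 1) :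
    ∃ u : Fin n → ℤ, u ≠ 0 ∧ (∀ k, u k = -1 ∨ u k = 0 ∨ u k = 1) ∧
      ∀ v ∈ S, (∑ k, (u k : ℚ) * v k) = 0 := by
  -- The span is a proper submodule
  have hlt : Submodule.span ℚ S < ⊤ := by
    rcases lt_or_eq_of_le (le_top : Submodule.span ℚ S ≤ ⊤) with h | h
    · exact h
    · exfalso
      have : Module.finrank ℚ (Submodule.span ℚ S) = n := by
        rw [h]
        simpa using Module.finrank_top ℚ (Fin n → ℚ)
      omega
  obtain ⟨f, hf0, hfbot⟩ :=
    Submodule.exists_dual_map_eq_bot_of_lt_top hlt inferInstance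
  -- f vanishes on S
  have hfS : ∀ v ∈ S, f v = 0 := by
    intro v hv
    have : f v ∈ Submodule.map f (Submodule.span ℚ S) :=
      ⟨v, Submodule.subset_span hv, rfl⟩
    rwa [hfbot, Submodule.mem_bot] at this
  set w : Fin n → ℚ := fun k => f (Pi.single k 1) with hw
  -- w satisfies w i + w j = 0 for every edge in S
  have hedge : ∀ i j : Fin n, (Pi.single i (1:ℚ) + Pi.single j 1) ∈ S → w i + w j = 0 := by
    intro i j h
    have := hfS _ h
    rwa [map_add] at this
  -- w ≠ 0
  have hwne : ∃ i0, w i0 ≠ 0 := by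
    by_contra h
    push_neg at h
    apply hf0
    apply LinearMap.ext
    intro x
    have : x = ∑ k, x k • (Pi.single k 1 : Fin n → ℚ) := by
      ext k; simp [Pi.single_apply]
    rw [this, map_sum]
    simp [hw] at h
    simp [h]
  obtain ⟨i0, hi0⟩ := hwne
  refine ⟨fun k => if w k = w i0 then 1 else if w k = -w i0 then -1 else 0, ?_, ?_, ?_⟩
  · intro h
    have := congrFun h i0
    simp at this
  · intro k
    by_cases h1 : w k = w i0
    · right; right; simp [h1]
    · by_cases h2 : w k = -w i0
      · left; show (if w k = w i0 then (1:ℤ) else if w k = -w i0 then -1 else 0) = -1; rw [if_neg h1, if_pos h2]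
      · right; left; simp [h1, h2]
  · intro v hv
    obtain ⟨i, j, rfl⟩ := hS hv
    have hij : w i + w j = 0 := hedge i j hv
    set F : Fin n → ℚ :=
      fun m => (((if w m = w i0 then 1 else if w m = -w i0 then -1 else 0 : ℤ) : ℚ)) with hF
    have key : ∀ k : Fin n,
        (((if w k = w i0 then 1 else if w k = -w i0 then -1 else 0 : ℤ) : ℚ))
          * ((Pi.single i 1 + Pi.single j 1 : Fin n → ℚ)) k
        = (if k = i then F i else 0) + (if k = j then F j else 0) := by
      intro k
      have hFk : (((if w k = w i0 then 1 else if w k = -w i0 then -1 else 0 : ℤ) : ℚ)) = F k :=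
        rfl
      rw [hFk]
      by_cases hki : k = i
      · subst hki
        by_cases hkj : k = j
        · subst hkj
          simp [Pi.single_apply]
          ring
        · simp [Pi.single_apply, hkj]
      · by_cases hkj : k = j
        · subst hkj
          simp [Pi.single_apply, hki]
        · simp [Pi.single_apply, hki, hkj]
    calc (∑ k, (((fun k => if w k = w i0 then 1 else if w k = -w i0 then -1 else 0 : Fin n → ℤ)) k : ℚ)
            * (Pi.single i 1 + Pi.single j 1 : Fin n → ℚ) k)
        = ∑ k, ((if k = i then F i else 0) + (if k = j then F j else 0)) :=
          Finset.sum_congr rfl fun k _ => key k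
      _ = F i + F j := by
          rw [Finset.sum_add_distrib, Finset.sum_ite_eq' Finset.univ i,
            Finset.sum_ite_eq' Finset.univ j]
          simp
      _ = 0 := by
          have hii0 : w i0 ≠ -w i0 := fun h => hi0 (by linarith)
          have hii0' : ¬ (-w i0 = w i0) := fun h => hii0 h.symm
          by_cases h1 : w i = w i0
          · have h2 : w j = -w i0 := by linarith
            have h3 : ¬ w j = w i0 := by rw [h2]; exact fun h => hii0 h.symm
            simp [hF, h1, h2, h3, hii0']
          · by_cases h2 : w i = -w i0
            · have h3 : w j = w i0 := by linarith
              simp [hF, h1, h2, h3, hii0']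
            · have h3 : ¬ w j = w i0 := by intro h; exact h2 (by linarith)
              have h4 : ¬ w j = -w i0 := by intro h; exact h1 (by linarith)
              simp [hF, h1, h2, h3, h4]
end
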